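/- arXiv:2408.03933 — 6 statements merged into one kernel-verified Lean document; each statement's English description precedes it below -/
import Mathlib

section
/- The directed graph D_int is acyclic: there exists a function from the vertices of D_int to the natural numbers that strictly increases along every directed edge (equivalently, D_int contains no directed cycle). -/
/-- A directed path (self-avoiding walk) from `s` to `t` in the digraph with
edge relation `E`, given as the list of its vertices in order. -/
structure IsPathList {V : Type*} (E : V → V → Prop) (s t : V) (p : List V) : Prop where
  chain : p.Chain' E
  nodup : p.Nodup
  head : p.head? = some s
  last : p.getLast? = some t

/-- A shortest directed `s⇝t` path, where the length of a path is its number of vertices. -/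
def IsShortestDirPath {V : Type*} (E : V → V → Prop) (s t : V) (p : List V) : Prop :=
  IsPathList E s t p ∧ ∀ q : List V, IsPathList E s t q → p.length ≤ q.length

/-- Symmetrization of a relation: the adjacency of the undirected graph obtained by
forgetting the orientation of the edges. -/
def UAdj {V : Type*} (E : V → V → Prop) (x y : V) : Prop := E x y ∨ E y x

/-- The cost of a path: the sum of the costs of its vertices. -/
def pathCost {V : Type*} (cost : V → ℕ) (p : List V) : ℕ := (p.map cost).sum

/-- A shortest (minimum-cost) `s`–`t` path in the undirected graph obtained from `E`. -/
def IsShortestCostPath {V : Type*} (E : V → V → Prop) (cost : V → ℕ) (s t : V)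
    (p : List V) : Prop :=
  IsPathList (UAdj E) s t p ∧
    ∀ q : List V, IsPathList (UAdj E) s t q → pathCost cost p ≤ pathCost cost q

/-- The (directed) edges traversed by a path, as ordered pairs of consecutive vertices. -/
def dirEdges {V : Type*} (p : List V) : List (V × V) := p.zip p.tail

/-- Two directed paths are edge-disjoint. -/
def EdgeDisj {V : Type*} (p q : List V) : Prop := ∀ e ∈ dirEdges p, e ∉ dirEdges q

/-- The (undirected) edges traversed by a path, as unordered pairs. -/
def uEdges {V : Type*} (p : List V) : List (Sym2 V) := (dirEdges p).map fun e => s(e.1, e.2)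

/-- Two undirected paths are edge-disjoint. -/
def UEdgeDisj {V : Type*} (p q : List V) : Prop := ∀ e ∈ uEdges p, e ∉ uEdges q

/-- Two paths are vertex-disjoint. -/
def VertDisj {V : Type*} (p q : List V) : Prop := ∀ v ∈ p, v ∉ q

/-- The vertices of the intermediate graph `D_int` (also the vertex set of `U_int`):
grid vertices `w_{i,j}^{q,ℓ}` (`grid i j q ℓ`, with `q` the column and `ℓ` the row,
indices `0`-based) and terminal vertices `a i`, `b i`, `c j`, `d j`. -/
inductive DIntV (k N : ℕ) where
  | grid (i j : Fin k) (q ℓ : Fin N)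
  | a (i : Fin k)
  | b (i : Fin k)
  | c (j : Fin k)
  | d (j : Fin k)
  deriving DecidableEq, Fintype

/-- The directed edges of `D_int`. -/
inductive DIntE (k N : ℕ) : DIntV k N → DIntV k N → Prop where
  /-- `w_{i,j}^{q,ℓ} → w_{i,j}^{q,ℓ+1}` for `ℓ < N` -/
  | up (i j : Fin k) (q ℓ ℓ' : Fin N) (h : (ℓ' : ℕ) = (ℓ : ℕ) + 1) :
      DIntE k N (.grid i j q ℓ) (.grid i j q ℓ')
  /-- `w_{i,j}^{q,ℓ} → w_{i,j}^{q+1,ℓ}` for `q < N` -/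
  | right (i j : Fin k) (q q' ℓ : Fin N) (h : (q' : ℕ) = (q : ℕ) + 1) :
      DIntE k N (.grid i j q ℓ) (.grid i j q' ℓ)
  /-- `w_{i,j}^{N,ℓ} → w_{i+1,j}^{1,ℓ}` for `i < k` -/
  | hmatch (i i' j : Fin k) (q q' ℓ : Fin N)
      (hi : (i' : ℕ) = (i : ℕ) + 1) (hq : (q : ℕ) + 1 = N) (hq' : (q' : ℕ) = 0) :
      DIntE k N (.grid i j q ℓ) (.grid i' j q' ℓ)
  /-- `w_{i,j}^{ℓ,N} → w_{i,j+1}^{ℓ,1}` for `j < k` -/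
  | vmatch (i j j' : Fin k) (q ℓ ℓ' : Fin N)
      (hj : (j' : ℕ) = (j : ℕ) + 1) (hl : (ℓ : ℕ) + 1 = N) (hl' : (ℓ' : ℕ) = 0) :
      DIntE k N (.grid i j q ℓ) (.grid i j' q ℓ')
  /-- `a_i → w_{i,1}^{q,1}` for all `q ∈ [N]` -/
  | srcA (i j : Fin k) (q ℓ : Fin N) (hj : (j : ℕ) = 0) (hl : (ℓ : ℕ) = 0) :
      DIntE k N (.a i) (.grid i j q ℓ)
  /-- `w_{i,k}^{q,N} → b_i` for all `q ∈ [N]` -/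
  | snkB (i j : Fin k) (q ℓ : Fin N) (hj : (j : ℕ) + 1 = k) (hl : (ℓ : ℕ) + 1 = N) :
      DIntE k N (.grid i j q ℓ) (.b i)
  /-- `c_j → w_{1,j}^{1,ℓ}` for all `ℓ ∈ [N]` -/
  | srcC (i j : Fin k) (q ℓ : Fin N) (hi : (i : ℕ) = 0) (hq : (q : ℕ) = 0) :
      DIntE k N (.c j) (.grid i j q ℓ)
  /-- `w_{k,j}^{N,ℓ} → d_j` for all `ℓ ∈ [N]` -/
  | snkD (i j : Fin k) (q ℓ : Fin N) (hi : (i : ℕ) + 1 = k) (hq : (q : ℕ) + 1 = N) :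
      DIntE k N (.grid i j q ℓ) (.d j)

/-- The horizontal canonical path `Canonical(r; c_j ⇝ d_j)`, as the list of its
vertices : `c_j`, then row `r` of the grids `D_{1,j}, …, D_{k,j}` from left to right,
then `d_j`. -/
def canonH (k N : ℕ) (j : Fin k) (r : Fin N) : List (DIntV k N) :=
  DIntV.c j ::
    (((List.finRange k).flatMap fun i =>
        (List.finRange N).map fun q => DIntV.grid i j q r) ++ [DIntV.d j])

/-- The vertical canonical path `Canonical(r; a_i ⇝ b_i)`, as the list of its
vertices : `a_i`, then column `r` of the grids `D_{i,1}, …, D_{i,k}` from bottom to top,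
then `b_i`. -/
def canonV (k N : ℕ) (i : Fin k) (r : Fin N) : List (DIntV k N) :=
  DIntV.a i ::
    (((List.finRange k).flatMap fun j =>
        (List.finRange N).map fun ℓ => DIntV.grid i j r ℓ) ++ [DIntV.b i])
/-- `D_int` is acyclic: there is a function from its vertices to ℕ that
strictly increases along every directed edge. -/
theorem DInt_acyclic (N k : ℕ) (hN : 1 ≤ N) (hk : 1 ≤ k) :
    ∃ f : DIntV k N → ℕ, ∀ u v : DIntV k N, DIntE k N u v → f u < f v := by
  refine ⟨fun v => match v with
    | .grid i j q ℓ => (i : ℕ) * N + (q : ℕ) + (j : ℕ) * N + (ℓ : ℕ) + 1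
    | .a _ => 0
    | .c _ => 0
    | .b _ => 2 * k * N + 1
    | .d _ => 2 * k * N + 1, ?_⟩
  intro u v h
  cases h with
  | up i j q ℓ ℓ' h => simp only; omega
  | right i j q q' ℓ h => simp only; omega
  | hmatch i i' j q q' ℓ hi hq hq' =>
      have : (i' : ℕ) * N = (i : ℕ) * N + N := by rw [hi]; ring
      simp only; omega
  | vmatch i j j' q ℓ ℓ' hj hl hl' =>
      have : (j' : ℕ) * N = (j : ℕ) * N + N := by rw [hj]; ring
      simp only; omega
  | srcA i j q ℓ hj hl => simp only; omega
  | srcC i j q ℓ hi hq => simp only; omega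
  | snkB i j q ℓ hj hl =>
      have h1 : ((i : ℕ) + 1) * N ≤ k * N := Nat.mul_le_mul_right N i.isLt
      have h2 : ((j : ℕ) + 1) * N ≤ k * N := Nat.mul_le_mul_right N j.isLt
      have hq := q.isLt; have hℓ := ℓ.isLt
      simp only; ring_nf; ring_nf at h1 h2; omega
  | snkD i j q ℓ hi hq =>
      have h1 : ((i : ℕ) + 1) * N ≤ k * N := Nat.mul_le_mul_right N i.isLt
      have h2 : ((j : ℕ) + 1) * N ≤ k * N := Nat.mul_le_mul_right N j.isLt
      have hq' := q.isLt; have hℓ := ℓ.isLt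
      simp only; ring_nf; ring_nf at h1 h2; omega
end

section
/- For every j ∈ [k], every directed path from c_j to d_j in D_int uses only vertices of Horizontal_int(j) = {c_j, d_j} ∪ { w_{i,j}^{q,ℓ} : i ∈ [k], q,ℓ ∈ [N] }. -/
/-- The vertex set `Horizontal_int(j) = {c_j, d_j} ∪ {w_{i,j}^{q,ℓ} : i ∈ [k], q,ℓ ∈ [N]}`. -/
def HorizontalSet (k N : ℕ) (j : Fin k) : Set (DIntV k N) :=
  {v | v = DIntV.c j ∨ v = DIntV.d j ∨ ∃ (i : Fin k) (q ℓ : Fin N), v = DIntV.grid i j q ℓ}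

/-- Forward invariant: not `a`, and j-coordinate at least `j`. -/
def fGe {k N : ℕ} (j : Fin k) : DIntV k N → Prop
  | .grid _ j' _ _ => (j : ℕ) ≤ (j' : ℕ)
  | .a _ => False
  | .b _ => True
  | .c j' => (j : ℕ) ≤ (j' : ℕ)
  | .d j' => (j : ℕ) ≤ (j' : ℕ)

/-- Backward invariant: not `b`, and j-coordinate at most `j`. -/
def fLe {k N : ℕ} (j : Fin k) : DIntV k N → Prop
  | .grid _ j' _ _ => (j' : ℕ) ≤ (j : ℕ)
  | .a _ => True
  | .b _ => False
  | .c j' => (j' : ℕ) ≤ (j : ℕ)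
  | .d j' => (j' : ℕ) ≤ (j : ℕ)

lemma frontInv {V : Type*} (E : V → V → Prop) (S : V → Prop)
    (hS : ∀ x y, E x y → S x → S y) :
    ∀ p : List V, p.Chain' E → ∀ s, p.head? = some s → S s → ∀ v ∈ p, S v := by
  intro p
  induction p with
  | nil => intro _ s hs; simp at hs
  | cons a l ih =>
    intro hc s hs hSs v hv
    simp only [List.head?_cons, Option.some.injEq] at hs
    subst hs
    rw [List.mem_cons] at hv
    rcases hv with rfl | hv
    · exact hSs
    · cases l with
      | nil => simp at hv
      | cons b l' =>
        rw [show List.Chain' E (a :: b :: l') ↔ _ from List.isChain_cons_cons] at hc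
        exact ih hc.2 b rfl (hS _ _ hc.1 hSs) v hv

lemma backInv {V : Type*} (E : V → V → Prop) (T : V → Prop)
    (hT : ∀ x y, E x y → T y → T x) :
    ∀ p : List V, p.Chain' E → ∀ t, p.getLast? = some t → T t → ∀ v ∈ p, T v := by
  intro p hc t ht hTt v hv
  have hc' : p.reverse.Chain' (flip E) := by
    exact List.isChain_reverse.mpr hc
  have ht' : p.reverse.head? = some t := by
    rw [List.head?_reverse]; exact ht
  exact frontInv (flip E) T (fun x y hxy => hT y x hxy) p.reverse hc' t ht' hTt v
    (List.mem_reverse.mpr hv)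

lemma fGe_closed {k N : ℕ} (j : Fin k) :
    ∀ x y : DIntV k N, DIntE k N x y → fGe j x → fGe j y := by
  intro x y hxy
  cases hxy <;> simp_all [fGe] <;> omega

lemma fLe_closed {k N : ℕ} (j : Fin k) :
    ∀ x y : DIntV k N, DIntE k N x y → fLe j y → fLe j x := by
  intro x y hxy
  cases hxy <;> simp_all [fLe] <;> omega

/-- every directed path from `c_j` to `d_j` in `D_int` uses only vertices
of `Horizontal_int(j)`. -/
theorem DInt_cd_paths_horizontal (N k : ℕ) (hN : 1 ≤ N) (hk : 1 ≤ k) (j : Fin k)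
    (p : List (DIntV k N)) (hp : IsPathList (DIntE k N) (DIntV.c j) (DIntV.d j) p) :
    ∀ v ∈ p, v ∈ HorizontalSet k N j := by
  intro v hv
  have hS := frontInv (DIntE k N) (fGe j) (fGe_closed j) p hp.chain _ hp.head
    (by simp [fGe]) v hv
  have hT := backInv (DIntE k N) (fLe j) (fLe_closed j) p hp.chain _ hp.last
    (by simp [fLe]) v hv
  cases v with
  | grid i j' q ℓ =>
    simp only [fGe] at hS
    simp only [fLe] at hT
    have : j' = j := Fin.ext (le_antisymm hT hS)
    subst this
    exact Or.inr (Or.inr ⟨i, q, ℓ, rfl⟩)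
  | a i => exact absurd hS (by simp [fGe])
  | b i => exact absurd hT (by simp [fLe])
  | c j' =>
    simp only [fGe] at hS
    simp only [fLe] at hT
    have : j' = j := Fin.ext (le_antisymm hT hS)
    subst this
    exact Or.inl rfl
  | d j' =>
    simp only [fGe] at hS
    simp only [fLe] at hT
    have : j' = j := Fin.ext (le_antisymm hT hS)
    subst this
    exact Or.inr (Or.inl rfl)
end

section
/- For every j ∈ [k] and every r ∈ [N], the horizontal canonical path Canonical(r; c_j⇝d_j) has exactly kN + 2 vertices, every directed path from c_j to d_j in D_int has at least kN + 2 vertices, and hence Canonical(r; c_j⇝d_j) is a shortest c_j⇝d_j path in D_int. -/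
namespace DIntAux

theorem flatMap_eq_range_map (k N : ℕ) {V : Type*} (g : ℕ → ℕ → V) :
    (List.finRange k).flatMap (fun i => (List.finRange N).map fun q => g i.val q.val)
      = (List.range (k*N)).map (fun m => g (m / N) (m % N)) := by
  induction k with
  | zero => simp
  | succ k ih =>
    rw [List.finRange_succ_last, List.flatMap_append, List.flatMap_map]
    simp only [Fin.coe_castSucc]
    rw [ih, Nat.succ_mul, List.range_add, List.map_append, List.map_map]
    congr 1
    · simp only [List.flatMap_singleton, Fin.val_last]
      rw [show (List.finRange N).map (fun q => g k q.val)
            = ((List.finRange N).map Fin.val).map (g k) by rw [List.map_map]; rfl,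
        show (List.finRange N).map Fin.val = List.range N from List.ext_getElem (by simp) (by simp)]
      apply List.map_congr_left
      intro q hq
      simp only [List.mem_range] at hq
      have hN0 : 0 < N := by omega
      simp only [Function.comp]
      rw [Nat.add_comm (k*N) q, Nat.add_mul_div_right _ _ hN0, Nat.add_mul_mod_self_right,
        Nat.div_eq_of_lt hq, Nat.mod_eq_of_lt hq, Nat.zero_add]

/-- Potential function: every directed edge of `D_int` increases it by at most `1`. -/
def phi (k N : ℕ) : DIntV k N → ℕ
  | .grid i _ q _ => i.val * N + q.val + 1
  | .a _ => k * N
  | .b _ => 0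
  | .c _ => 0
  | .d _ => k * N + 1

theorem phi_step {k N : ℕ} {x y : DIntV k N} (h : DIntE k N x y) :
    phi k N y ≤ phi k N x + 1 := by
  cases h with
  | up i j q ℓ ℓ' h => simp [phi]
  | right i j q q' ℓ h => simp only [phi]; omega
  | hmatch i i' j q q' ℓ hi hq hq' =>
      simp only [phi]
      have : i'.val * N = i.val * N + N := by rw [hi, Nat.succ_mul]
      omega
  | vmatch i j j' q ℓ ℓ' hj hl hl' => simp [phi]
  | srcA i j q ℓ hj hl =>
      simp only [phi]
      have h1 : i.val + 1 ≤ k := i.isLt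
      have h2 : q.val + 1 ≤ N := q.isLt
      have : (i.val + 1) * N ≤ k * N := Nat.mul_le_mul_right N h1
      rw [Nat.succ_mul] at this
      omega
  | snkB i j q ℓ hj hl => simp [phi]
  | srcC i j q ℓ hi hq => simp [phi, hi, hq]
  | snkD i j q ℓ hi hq =>
      simp only [phi]
      have : (i.val + 1) * N = k * N := by rw [hi]
      rw [Nat.succ_mul] at this
      omega

theorem phi_bound {k N : ℕ} : ∀ (p : List (DIntV k N)) (x y : DIntV k N),
    p.Chain' (DIntE k N) → p.head? = some x → p.getLast? = some y →
    phi k N y ≤ phi k N x + (p.length - 1) := by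
  intro p
  induction p with
  | nil => intro x y _ h; simp at h
  | cons z rest ih =>
    intro x y hch hh hl
    simp only [List.head?_cons, Option.some.injEq] at hh
    subst hh
    match rest, hch, hl with
    | [], _, hl =>
        simp only [List.getLast?_singleton, Option.some.injEq] at hl
        subst hl; simp
    | w :: rest', hch, hl =>
        unfold List.Chain' at hch; rw [List.isChain_cons_cons] at hch
        have h1 : phi k N w ≤ phi k N z + 1 := phi_step hch.1
        have h2 := ih w y hch.2 rfl (by rw [← hl, List.getLast?_cons_cons])
        simp only [List.length_cons] at *
        omega

end DIntAux

/-- for every `j ∈ [k]` and `r ∈ [N]`, the horizontal canonical path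
`Canonical(r; c_j⇝d_j)` has exactly `kN + 2` vertices, every directed `c_j⇝d_j` path in
`D_int` has at least `kN + 2` vertices, and hence `Canonical(r; c_j⇝d_j)` is a shortest
`c_j⇝d_j` path in `D_int`. -/
theorem DInt_canonH_shortest (N k : ℕ) (hN : 1 ≤ N) (hk : 1 ≤ k) (j : Fin k) (r : Fin N) :
    (canonH k N j r).length = k * N + 2 ∧
    (∀ p : List (DIntV k N),
      IsPathList (DIntE k N) (DIntV.c j) (DIntV.d j) p → k * N + 2 ≤ p.length) ∧
    IsShortestDirPath (DIntE k N) (DIntV.c j) (DIntV.d j) (canonH k N j r) := by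
  classical
  have hN0 : 0 < N := hN
  have hk0 : 0 < k := hk
  have hkN : 0 < k * N := Nat.mul_pos hk0 hN0
  -- the canonical path, rewritten as a map over `range (k*N)`
  set g : ℕ → ℕ → DIntV k N := fun a b =>
    DIntV.grid ⟨a % k, Nat.mod_lt _ hk0⟩ j ⟨b % N, Nat.mod_lt _ hN0⟩ r with hg
  set F : ℕ → DIntV k N := fun m => g (m / N) (m % N) with hF
  have hcanon : canonH k N j r
      = DIntV.c j :: ((List.range (k*N)).map F ++ [DIntV.d j]) := by
    unfold canonH
    congr 2
    rw [show ((List.finRange k).flatMap fun i =>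
          (List.finRange N).map fun q => DIntV.grid i j q r)
        = (List.finRange k).flatMap fun i =>
          (List.finRange N).map fun q =>
            g i.val q.val from by
      apply List.flatMap_congr
      intro i _
      apply List.map_congr_left
      intro q _
      rw [hg]
      congr 1 <;> [exact Fin.ext (Nat.mod_eq_of_lt i.isLt).symm;
        exact Fin.ext (Nat.mod_eq_of_lt q.isLt).symm]]
    exact DIntAux.flatMap_eq_range_map k N g
  -- basic arithmetic facts about F
  have hdivlt : ∀ m, m < k * N → m / N < k := fun m hm =>
    Nat.div_lt_of_lt_mul (by rwa [Nat.mul_comm])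
  have hFval : ∀ m (hm : m < k * N),
      F m = DIntV.grid ⟨m / N, hdivlt m hm⟩ j ⟨m % N, Nat.mod_lt _ hN0⟩ r := by
    intro m hm
    simp only [hF, hg]
    congr 1
    · exact Fin.ext (Nat.mod_eq_of_lt (hdivlt m hm))
    · exact Fin.ext (Nat.mod_eq_of_lt (Nat.mod_lt _ hN0))
  -- length
  have hlen : (canonH k N j r).length = k * N + 2 := by
    rw [hcanon]; simp
  -- head of the grid part
  have hA_ne : (List.range (k*N)).map F ≠ [] := by
    intro h
    have := congrArg List.length h
    simp at this
    omega
  -- last element of the grid part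
  have hlast_split : List.range (k*N) = List.range (k*N - 1) ++ [k*N - 1] := by
    rw [← List.range_succ]
    congr 1
    omega
  have hlastA : ((List.range (k*N)).map F).getLast? = some (F (k*N - 1)) := by
    rw [hlast_split, List.map_append]
    simp
  have hNle : N ≤ k * N := Nat.le_mul_of_pos_left N hk0
  have hrep_last : k*N - 1 = (N - 1) + (k-1) * N := by
    rw [Nat.sub_one_mul]; omega
  have hdiv_last : (k*N - 1) / N = k - 1 := by
    rw [hrep_last, Nat.add_mul_div_right _ _ hN0, Nat.div_eq_of_lt (by omega), Nat.zero_add]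
  have hmod_last : (k*N - 1) % N = N - 1 := by
    rw [hrep_last, Nat.add_mul_mod_self_right, Nat.mod_eq_of_lt (by omega)]
  -- chain'
  have hchainA : ((List.range (k*N)).map F).Chain' (DIntE k N) := by
    unfold List.Chain'; rw [List.isChain_map]
    rw [show k*N = (k*N - 1) + 1 by omega, List.isChain_range_succ]
    intro m hm
    have hm1 : m < k * N := by omega
    have hm2 : m + 1 < k * N := by omega
    rw [hFval m hm1, hFval (m+1) hm2]
    by_cases hcase : m % N + 1 = N
    · -- end of a row: matching edge
      have hdiv : (m+1) / N = m / N + 1 := by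
        have hdm := Nat.div_add_mod m N
        have hcm : N * (m / N) = (m / N) * N := Nat.mul_comm _ _
        have hrep : m + 1 = 0 + (m / N + 1) * N := by
          rw [Nat.succ_mul]; omega
        rw [hrep, Nat.add_mul_div_right _ _ hN0, Nat.div_eq_of_lt hN0, Nat.zero_add]
      have hmod : (m+1) % N = 0 := by
        have hdm := Nat.div_add_mod m N
        have hcm : N * (m / N) = (m / N) * N := Nat.mul_comm _ _
        have hrep : m + 1 = 0 + (m / N + 1) * N := by
          rw [Nat.succ_mul]; omega
        rw [hrep, Nat.add_mul_mod_self_right, Nat.zero_mod]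
      exact DIntE.hmatch _ _ _ _ _ _ (by simp [hdiv]) (by simpa using hcase) (by simp [hmod])
    · -- inside a row: right edge
      have hmodlt : m % N < N := Nat.mod_lt _ hN0
      have hdiv : (m+1) / N = m / N := by
        have hdm := Nat.div_add_mod m N
        have hcm : N * (m / N) = (m / N) * N := Nat.mul_comm _ _
        have hrep : m + 1 = (m % N + 1) + m / N * N := by omega
        rw [hrep, Nat.add_mul_div_right _ _ hN0, Nat.div_eq_of_lt (by omega), Nat.zero_add]
      have hmod : (m+1) % N = m % N + 1 := by
        have hdm := Nat.div_add_mod m N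
        have hcm : N * (m / N) = (m / N) * N := Nat.mul_comm _ _
        have hrep : m + 1 = (m % N + 1) + m / N * N := by omega
        rw [hrep, Nat.add_mul_mod_self_right, Nat.mod_eq_of_lt (by omega)]
      have hieq : (⟨(m+1)/N, hdivlt (m+1) hm2⟩ : Fin k) = ⟨m/N, hdivlt m hm1⟩ :=
        Fin.ext hdiv
      rw [hieq]
      exact DIntE.right _ _ _ _ _ (by simpa using hmod)
  have hheadA : ((List.range (k*N)).map F).head? = some (F 0) := by
    rw [List.range_eq_range', show k*N = (k*N-1)+1 by omega, List.range'_succ]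
    rfl
  have hchain : (canonH k N j r).Chain' (DIntE k N) := by
    rw [hcanon]
    unfold List.Chain'; rw [List.isChain_cons]
    constructor
    · intro y hy
      rw [List.head?_append_of_ne_nil _ hA_ne, hheadA] at hy
      simp only [Option.mem_def, Option.some.injEq] at hy
      subst hy
      rw [hFval 0 hkN]
      exact DIntE.srcC _ _ _ _ (by simp [Nat.div_eq_of_lt hN0]) (by simp [Nat.mod_eq_of_lt hN0])
    · rw [List.isChain_append]
      refine ⟨hchainA, List.isChain_singleton _, ?_⟩
      intro x hx y hy
      simp only [List.head?_cons, Option.mem_def, Option.some.injEq] at hy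
      subst hy
      rw [hlastA] at hx
      simp only [Option.mem_def, Option.some.injEq] at hx
      subst hx
      rw [hFval _ (by omega)]
      exact DIntE.snkD _ _ _ _ (by simp [hdiv_last]; omega) (by simp [hmod_last]; omega)
  -- nodup
  have hnodupA : ((List.range (k*N)).map F).Nodup := by
    apply List.Nodup.map_on _ List.nodup_range
    intro m hm m' hm' heq
    simp only [List.mem_range] at hm hm'
    rw [hFval m hm, hFval m' hm'] at heq
    have h1 : m / N = m' / N := by
      have := congrArg (fun v => match v with
        | DIntV.grid i _ _ _ => i.val | _ => 0) heq
      simpa using this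
    have h2 : m % N = m' % N := by
      have := congrArg (fun v => match v with
        | DIntV.grid _ _ q _ => q.val | _ => 0) heq
      simpa using this
    have e1 := Nat.div_add_mod m N
    have e2 := Nat.div_add_mod m' N
    rw [h1, h2] at e1
    omega
  have hnodup : (canonH k N j r).Nodup := by
    rw [hcanon]
    rw [List.nodup_cons]
    constructor
    · intro hc
      rw [List.mem_append] at hc
      rcases hc with hc | hc
      · obtain ⟨m, _, hm⟩ := List.mem_map.1 hc
        simp [hF] at hm
      · simp at hc
    · rw [List.nodup_append]
      refine ⟨hnodupA, List.nodup_singleton _, ?_⟩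
      intro x hx
      obtain ⟨m, _, hm⟩ := List.mem_map.1 hx
      subst hm
      simp [hF]
  have hhead : (canonH k N j r).head? = some (DIntV.c j) := by rw [hcanon]; rfl
  have hlast : (canonH k N j r).getLast? = some (DIntV.d j) := by
    rw [hcanon, show DIntV.c j :: ((List.range (k*N)).map F ++ [DIntV.d j])
        = (DIntV.c j :: (List.range (k*N)).map F) ++ [DIntV.d j] by simp,
      List.getLast?_concat]
  have hispath : IsPathList (DIntE k N) (DIntV.c j) (DIntV.d j) (canonH k N j r) :=
    ⟨hchain, hnodup, hhead, hlast⟩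
  have hlower : ∀ p : List (DIntV k N),
      IsPathList (DIntE k N) (DIntV.c j) (DIntV.d j) p → k * N + 2 ≤ p.length := by
    intro p hp
    have := DIntAux.phi_bound p _ _ hp.chain hp.head hp.last
    simp only [DIntAux.phi] at this
    have hne : p ≠ [] := by
      intro h; subst h
      exact absurd hp.head (by simp)
    have : 1 ≤ p.length := List.length_pos_iff.2 hne
    omega
  exact ⟨hlen, hlower, hispath, fun q hq => by rw [hlen]; exact hlower q hq⟩
end

section
/- For every j ∈ [k], every shortest directed path from c_j to d_j in D_int equals the horizontal canonical path Canonical(ℓ; c_j⇝d_j) for some ℓ ∈ [N]. -/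
section DevAux
variable {k N : ℕ}

/-- Potential: global column index. -/
def fvAux (k N : ℕ) : DIntV k N → ℕ
  | .grid i _ q _ => (i : ℕ) * N + (q : ℕ) + 1
  | .a i => ((i : ℕ) + 1) * N - 1
  | .b _ => 0
  | .c _ => 0
  | .d _ => k * N + 1

lemma fvAux_le {x y : DIntV k N} (h : DIntE k N x y) : fvAux k N y ≤ fvAux k N x + 1 := by
  cases h with
  | up i j q ℓ ℓ' h => simp [fvAux]
  | right i j q q' ℓ h =>
      simp only [fvAux]; omega
  | hmatch i i' j q q' ℓ hi hq hq' =>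
      simp only [fvAux, hi, hq', Nat.succ_mul]; omega
  | vmatch i j j' q ℓ ℓ' hj hl hl' => simp [fvAux]
  | srcA i j q ℓ hj hl =>
      have hq := q.isLt
      simp only [fvAux, Nat.succ_mul]
      have : 0 < ((i:ℕ)+1) * N := Nat.mul_pos (Nat.succ_pos _) q.pos
      omega
  | snkB i j q ℓ hj hl => simp [fvAux]
  | srcC i j q ℓ hi hq => simp [fvAux, hi, hq]
  | snkD i j q ℓ hi hq =>
      have h2 : ((i:ℕ)+1) * N = k * N := by rw [hi]
      have h3 : ((i:ℕ)+1)*N = (i:ℕ)*N + N := by ring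
      simp only [fvAux]; omega

end DevAux
section DevAux2
variable {V : Type*} {E : V → V → Prop} {f : V → ℕ}

lemma fv_last_le (hE : ∀ x y, E x y → f y ≤ f x + 1) :
    ∀ (p : List V) (s t : V), p.Chain' E → p.head? = some s → p.getLast? = some t →
      f t + 1 ≤ f s + p.length := by
  intro p
  induction p with
  | nil => intro s t _ h; simp at h
  | cons x l ih =>
    intro s t hc hh hl
    simp only [List.head?_cons, Option.some.injEq] at hh
    subst hh
    cases l with
    | nil =>
      simp only [List.getLast?_singleton, Option.some.injEq] at hl
      subst hl; simp
    | cons y l' =>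
      rw [List.Chain', List.isChain_cons_cons] at hc
      have h1 := hE _ _ hc.1
      have h2 := ih y t hc.2 rfl (by rwa [List.getLast?_cons_cons] at hl)
      simp only [List.length_cons] at *
      omega

lemma tight_chain (hE : ∀ x y, E x y → f y ≤ f x + 1) :
    ∀ (p : List V) (s t : V), p.Chain' E → p.head? = some s → p.getLast? = some t →
      f t + 1 = f s + p.length →
      p.Chain' (fun x y => E x y ∧ f y = f x + 1) := by
  intro p
  induction p with
  | nil => intro s t _ h; simp at h
  | cons x l ih =>
    intro s t hc hh hl heq
    simp only [List.head?_cons, Option.some.injEq] at hh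
    subst hh
    cases l with
    | nil => simp [List.Chain']
    | cons y l' =>
      rw [List.Chain', List.isChain_cons_cons] at hc
      have hl' : (y :: l').getLast? = some t := by rwa [List.getLast?_cons_cons] at hl
      have h1 := hE _ _ hc.1
      have h2 := fv_last_le hE (y :: l') y t hc.2 rfl hl'
      simp only [List.length_cons] at *
      have hxy : f y = f x + 1 := by omega
      rw [List.Chain', List.isChain_cons_cons]
      exact ⟨⟨hc.1, hxy⟩, ih y t hc.2 rfl hl' (by omega)⟩

end DevAux2
section DevAux3
variable {k N : ℕ}

def stepv (k N : ℕ) : DIntV k N → DIntV k N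
  | .grid i j q ℓ =>
    if hq : (q : ℕ) + 1 < N then .grid i j ⟨(q : ℕ) + 1, hq⟩ ℓ
    else if hi : (i : ℕ) + 1 < k then .grid ⟨(i : ℕ) + 1, hi⟩ j ⟨0, q.pos⟩ ℓ
    else .d j
  | x => x

lemma stepv_grid (i j : Fin k) (q ℓ : Fin N) :
    stepv k N (.grid i j q ℓ) =
      if hq : (q : ℕ) + 1 < N then .grid i j ⟨(q : ℕ) + 1, hq⟩ ℓ
      else if hi : (i : ℕ) + 1 < k then .grid ⟨(i : ℕ) + 1, hi⟩ j ⟨0, q.pos⟩ ℓ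
      else .d j := rfl

def csuf (k N : ℕ) : ℕ → DIntV k N → List (DIntV k N)
  | 0, v => [v]
  | n+1, v => v :: csuf k N n (stepv k N v)

lemma csuf_succ (n : ℕ) (v : DIntV k N) :
    csuf k N (n+1) v = v :: csuf k N n (stepv k N v) := rfl

/-- Invariant: vertex is a grid vertex in column block `j`, row `r`, or the sink. -/
def InvJR (j : Fin k) (r : Fin N) (v : DIntV k N) : Prop :=
  (∃ i q, v = DIntV.grid i j q r) ∨ v = DIntV.d j

lemma stepv_edge (i j : Fin k) (q r : Fin N) :
    DIntE k N (.grid i j q r) (stepv k N (.grid i j q r)) := by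
  rw [stepv_grid]
  split
  · rename_i hq
    exact .right i j q ⟨(q:ℕ)+1, hq⟩ r rfl
  · rename_i hq
    split
    · rename_i hi
      exact .hmatch i ⟨(i:ℕ)+1, hi⟩ j q ⟨0, q.pos⟩ r rfl (by have := q.isLt; omega) rfl
    · rename_i hi
      exact .snkD i j q r (by have := i.isLt; omega) (by have := q.isLt; omega)

lemma stepv_fv (i j : Fin k) (q r : Fin N) :
    fvAux k N (stepv k N (.grid i j q r)) = fvAux k N (.grid i j q r) + 1 := by
  rw [stepv_grid]
  split
  · simp only [fvAux]; omega
  · rename_i hq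
    have hqN : (q : ℕ) + 1 = N := by have := q.isLt; omega
    split
    · rename_i hi
      simp only [fvAux]
      have : ((i:ℕ)+1) * N = (i:ℕ)*N + N := by ring
      omega
    · rename_i hi
      have hik : (i : ℕ) + 1 = k := by have := i.isLt; omega
      simp only [fvAux]
      have h2 : ((i:ℕ)+1) * N = k * N := by rw [hik]
      have h3 : ((i:ℕ)+1)*N = (i:ℕ)*N + N := by ring
      omega

lemma stepv_inv (i : Fin k) (j : Fin k) (q r : Fin N) :
    InvJR j r (stepv k N (.grid i j q r)) := by
  rw [stepv_grid]
  split
  · exact Or.inl ⟨_, _, rfl⟩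
  · split
    · exact Or.inl ⟨_, _, rfl⟩
    · exact Or.inr rfl

lemma fv_grid_le (i : Fin k) (j : Fin k) (q r : Fin N) :
    fvAux k N (.grid i j q r) ≤ k * N := by
  simp only [fvAux]
  have h1 : ((i:ℕ)+1) * N ≤ k * N := Nat.mul_le_mul_right N i.isLt
  have h3 : ((i:ℕ)+1)*N = (i:ℕ)*N + N := by ring
  have := q.isLt
  omega

lemma csuf_length (n : ℕ) (v : DIntV k N) : (csuf k N n v).length = n + 1 := by
  induction n generalizing v with
  | zero => rfl
  | succ n ih => simp [csuf, ih]

lemma csuf_head (n : ℕ) (v : DIntV k N) : (csuf k N n v).head? = some v := by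
  cases n <;> rfl

lemma csuf_mem_fv {j : Fin k} {r : Fin N} :
    ∀ (n : ℕ) (v : DIntV k N), InvJR j r v → ∀ y ∈ csuf k N n v, fvAux k N v ≤ fvAux k N y := by
  intro n
  induction n with
  | zero => intro v _ y hy; simp [csuf] at hy; subst hy; exact le_refl _
  | succ n ih =>
    intro v hv y hy
    rw [csuf_succ] at hy
    simp only [List.mem_cons] at hy
    rcases hy with rfl | hy
    · exact le_refl _
    · rcases hv with ⟨i, q, rfl⟩ | rfl
      · have h1 := stepv_fv i j q r
        have h2 := ih _ (stepv_inv i j q r) y hy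
        omega
      · have hd : stepv k N (DIntV.d j) = DIntV.d j := rfl
        rw [hd] at hy
        exact ih _ (Or.inr rfl) y hy

lemma csuf_chain {j : Fin k} {r : Fin N} :
    ∀ (n : ℕ) (v : DIntV k N), InvJR j r v → fvAux k N v + n = k * N + 1 →
      (csuf k N n v).Chain' (DIntE k N) := by
  intro n
  induction n with
  | zero => intro v _ _; simp [csuf, List.Chain']
  | succ n ih =>
    intro v hv hn
    rcases hv with ⟨i, q, rfl⟩ | rfl
    · rw [csuf_succ, List.Chain', List.isChain_cons]
      constructor
      · intro y hy
        rw [csuf_head] at hy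
        cases hy
        exact stepv_edge i j q r
      · exact ih _ (stepv_inv i j q r) (by have := stepv_fv i j q r; omega)
    · exfalso; simp [fvAux] at hn

lemma csuf_last {j : Fin k} {r : Fin N} :
    ∀ (n : ℕ) (v : DIntV k N), InvJR j r v → fvAux k N v + n = k * N + 1 →
      (csuf k N n v).getLast? = some (DIntV.d j) := by
  intro n
  induction n with
  | zero =>
    intro v hv hn
    rcases hv with ⟨i, q, rfl⟩ | rfl
    · exfalso; have := fv_grid_le i j q r; omega
    · rfl
  | succ n ih =>
    intro v hv hn
    rcases hv with ⟨i, q, rfl⟩ | rfl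
    · rw [csuf_succ, List.getLast?_cons,
        ih _ (stepv_inv i j q r) (by have := stepv_fv i j q r; omega)]
      rfl
    · exfalso; simp [fvAux] at hn

lemma csuf_pairwise {j : Fin k} {r : Fin N} :
    ∀ (n : ℕ) (v : DIntV k N), InvJR j r v → fvAux k N v + n ≤ k * N + 1 →
      (csuf k N n v).Pairwise (fun x y => fvAux k N x < fvAux k N y) := by
  intro n
  induction n with
  | zero => intro v _ _; simp [csuf]
  | succ n ih =>
    intro v hv hn
    rw [csuf_succ, List.pairwise_cons]
    rcases hv with ⟨i, q, rfl⟩ | rfl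
    · have h2 := stepv_fv i j q r
      refine ⟨fun y hy => ?_, ih _ (stepv_inv i j q r) (by omega)⟩
      have h1 := csuf_mem_fv n _ (stepv_inv i j q r) y hy
      omega
    · exfalso; simp [fvAux] at hn

end DevAux3
section DevAux4
variable {k N : ℕ}

lemma no_edge_from_d {j : Fin k} {y : DIntV k N} (h : DIntE k N (.d j) y) : False := by
  cases h

lemma succ_unique {i j : Fin k} {q r : Fin N} {y : DIntV k N}
    (h : DIntE k N (.grid i j q r) y)
    (hf : fvAux k N y = fvAux k N (.grid i j q r) + 1) :
    y = stepv k N (.grid i j q r) := by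
  rw [stepv_grid]
  cases h with
  | up _ _ _ _ ℓ' h => exfalso; simp only [fvAux] at hf; omega
  | right _ _ _ q' _ h =>
    have hq : (q : ℕ) + 1 < N := h ▸ q'.isLt
    rw [dif_pos hq]
    congr 1
    exact Fin.ext h
  | hmatch _ i' _ _ q' _ hi hq hq' =>
    have hqN : ¬ ((q : ℕ) + 1 < N) := by omega
    have hik : (i : ℕ) + 1 < k := hi ▸ i'.isLt
    rw [dif_neg hqN, dif_pos hik]
    congr 1
    · exact Fin.ext hi
    · exact Fin.ext hq'
  | vmatch _ _ j' _ _ ℓ' hj hl hl' => exfalso; simp only [fvAux] at hf; omega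
  | snkB _ _ _ _ hj hl => exfalso; simp only [fvAux] at hf; omega
  | snkD _ _ _ _ hi hq =>
    have hqN : ¬ ((q : ℕ) + 1 < N) := by omega
    have hik : ¬ ((i : ℕ) + 1 < k) := by omega
    rw [dif_neg hqN, dif_neg hik]

/-- A tight chain starting at a grid/sink vertex with the right length is the canonical suffix. -/
lemma chain_eq_csuf {j : Fin k} {r : Fin N} :
    ∀ (n : ℕ) (rest : List (DIntV k N)) (v : DIntV k N),
      rest.Chain' (fun x y => DIntE k N x y ∧ fvAux k N y = fvAux k N x + 1) →
      rest.head? = some v → rest.length = n + 1 → InvJR j r v →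
      rest = csuf k N n v := by
  intro n
  induction n with
  | zero =>
    intro rest v _ hh hl _
    match rest, hl with
    | [x], _ =>
      simp only [List.head?_cons, Option.some.injEq] at hh
      rw [hh]; rfl
  | succ n ih =>
    intro rest v hc hh hl hv
    match rest, hl with
    | x :: y :: l, hl =>
      simp only [List.head?_cons, Option.some.injEq] at hh
      subst hh
      rw [List.Chain', List.isChain_cons_cons] at hc
      rcases hv with ⟨i, q, rfl⟩ | rfl
      · have hy : y = stepv k N (.grid i j q r) := succ_unique hc.1.1 hc.1.2
        rw [csuf_succ, ← hy]
        congr 1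
        exact ih (y :: l) y hc.2 rfl (by simpa using hl) (hy ▸ stepv_inv i j q r)
      · exact absurd hc.1.1 no_edge_from_d

end DevAux4
section DevAux5
variable {k N : ℕ}

def rowEnd (j : Fin k) (r : Fin N) (i : Fin k) (hN : 0 < N) : DIntV k N :=
  if hi : (i : ℕ) + 1 < k then DIntV.grid ⟨(i : ℕ) + 1, hi⟩ j ⟨0, hN⟩ r else DIntV.d j

lemma stepv_rowEnd {j : Fin k} {r : Fin N} (i : Fin k) (qf : Fin N)
    (h : (qf : ℕ) + 1 = N) :
    stepv k N (.grid i j qf r) = rowEnd j r i qf.pos := by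
  rw [stepv_grid, dif_neg (by omega)]
  rfl

lemma row_lemma {j : Fin k} {r : Fin N} (i : Fin k) (n' : ℕ) :
    ∀ (m : ℕ) (qf : Fin N), (qf : ℕ) + m + 1 = N →
      csuf k N (m + 1 + n') (.grid i j qf r)
        = (List.range' (qf : ℕ) (m+1)).map
            (fun q' => DIntV.grid i j ⟨q' % N, Nat.mod_lt _ qf.pos⟩ r)
          ++ csuf k N n' (rowEnd j r i qf.pos) := by
  intro m
  induction m with
  | zero =>
    intro qf hq
    rw [show (0 + 1 + n') = n' + 1 by omega, csuf_succ, stepv_rowEnd i qf (by omega)]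
    have : (⟨(qf:ℕ) % N, Nat.mod_lt _ qf.pos⟩ : Fin N) = qf :=
      Fin.ext (Nat.mod_eq_of_lt qf.isLt)
    simp [List.range'_succ, this]
  | succ m ih =>
    intro qf hq
    have hq1 : (qf : ℕ) + 1 < N := by omega
    rw [show (m + 1 + 1 + n') = (m + 1 + n') + 1 by omega, csuf_succ, stepv_grid,
      dif_pos hq1]
    have hmk : ((⟨(qf:ℕ)+1, hq1⟩ : Fin N) : ℕ) = (qf : ℕ) + 1 := rfl
    rw [ih ⟨(qf:ℕ)+1, hq1⟩ (by omega)]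
    rw [List.range'_succ]
    simp only [List.map_cons, List.cons_append, hmk]
    congr 2
    exact (Fin.ext (Nat.mod_eq_of_lt qf.isLt)).symm

lemma cols_lemma {j : Fin k} {r : Fin N} :
    ∀ (c : ℕ) (i : Fin k), (i : ℕ) + c + 1 = k →
      csuf k N ((c+1) * N) (.grid i j ⟨0, r.pos⟩ r)
        = (List.range' (i : ℕ) (c+1)).flatMap
            (fun i' => (List.range N).map
              (fun q' => DIntV.grid ⟨i' % k, Nat.mod_lt _ i.pos⟩ j
                ⟨q' % N, Nat.mod_lt _ r.pos⟩ r))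
          ++ [DIntV.d j] := by
  intro c
  have hmk0 : ∀ (h : 0 < N), ((⟨0, h⟩ : Fin N) : ℕ) = 0 := fun _ => rfl
  induction c with
  | zero =>
    intro i hi
    have hrow := row_lemma (j := j) (r := r) i 0 (N-1) ⟨0, r.pos⟩
      (by have := hmk0 r.pos; have := r.pos; omega)
    rw [show (0+1) * N = (N-1) + 1 + 0 by have := r.pos; omega, hrow]
    have hre : rowEnd j r i (Fin.pos ⟨0, r.pos⟩) = DIntV.d j := by
      rw [rowEnd, dif_neg (by omega)]
    rw [hre]
    rw [show ((⟨0, r.pos⟩ : Fin N) : ℕ) = 0 from rfl,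
      show (N - 1 + 1) = N by have := r.pos; omega, ← List.range_eq_range']
    simp only [Nat.zero_add, List.range'_one, List.flatMap_cons, List.flatMap_nil, List.append_nil]
    show _ ++ [DIntV.d j] = _ ++ [DIntV.d j]
    congr 1
    apply List.map_congr_left
    intro q' _
    congr 1
    exact Fin.ext (by simp [Nat.mod_eq_of_lt i.isLt])
  | succ c ih =>
    intro i hi
    have hik : (i : ℕ) + 1 < k := by omega
    have hrow := row_lemma (j := j) (r := r) i ((c+1)*N) (N-1) ⟨0, r.pos⟩
      (by have := hmk0 r.pos; have := r.pos; omega)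
    rw [show (c+1+1) * N = (N-1) + 1 + (c+1)*N by
      have := r.pos
      have : (c+1+1) * N = N + (c+1) * N := by ring
      omega]
    rw [hrow]
    have hre : rowEnd j r i (Fin.pos ⟨0, r.pos⟩) = .grid ⟨(i:ℕ)+1, hik⟩ j ⟨0, r.pos⟩ r := by
      rw [rowEnd, dif_pos hik]
    rw [hre, ih ⟨(i:ℕ)+1, hik⟩ (by have : ((⟨(i:ℕ)+1, hik⟩ : Fin k) : ℕ) = (i:ℕ)+1 := rfl; omega)]
    conv_rhs => rw [List.range'_succ, List.flatMap_cons, List.append_assoc]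
    rw [show ((⟨0, r.pos⟩ : Fin N) : ℕ) = 0 from rfl,
      show (N - 1 + 1) = N by have := r.pos; omega, ← List.range_eq_range']
    congr 1
    · apply List.map_congr_left
      intro q' _
      congr 1
      exact Fin.ext (by simp [Nat.mod_eq_of_lt i.isLt])

lemma csuf_eq_canonH (hk : 0 < k) (hN : 0 < N) (j : Fin k) (r : Fin N) :
    DIntV.c j :: csuf k N (k * N) (.grid ⟨0, hk⟩ j ⟨0, hN⟩ r) = canonH k N j r := by
  have hcols := cols_lemma (j := j) (r := r) (k-1) ⟨0, hk⟩ (by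
    have : ((⟨0, hk⟩ : Fin k) : ℕ) = 0 := rfl
    omega)
  rw [show (k-1+1) * N = k * N by congr 1; omega] at hcols
  rw [show (⟨0, hN⟩ : Fin N) = ⟨0, Fin.pos r⟩ from rfl, hcols, canonH]
  congr 1
  rw [show ((⟨0, hk⟩ : Fin k) : ℕ) = 0 from rfl,
    show (k - 1 + 1) = k by omega, ← List.range_eq_range']
  congr 1
  rw [← (show ∀ n, (List.finRange n).map Fin.val = List.range n from fun _ => List.ext_getElem (by simp) (by simp)) k, List.flatMap_map, List.flatMap_def, List.flatMap_def]
  congr 1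
  apply List.map_congr_left
  intro i _
  rw [← (show ∀ n, (List.finRange n).map Fin.val = List.range n from fun _ => List.ext_getElem (by simp) (by simp)) N, List.map_map]
  apply List.map_congr_left
  intro q _
  show DIntV.grid ⟨(i:ℕ) % k, _⟩ j ⟨(q:ℕ) % N, _⟩ r = DIntV.grid i j q r
  congr 1
  · exact Fin.ext (Nat.mod_eq_of_lt i.isLt)
  · exact Fin.ext (Nat.mod_eq_of_lt q.isLt)

end DevAux5
section DevAux6
variable {k N : ℕ}

lemma canonH_isPath (hk : 0 < k) (hN : 0 < N) (j : Fin k) (r : Fin N) :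
    IsPathList (DIntE k N) (.c j) (.d j) (canonH k N j r) := by
  rw [← csuf_eq_canonH hk hN j r]
  set v0 : DIntV k N := .grid ⟨0, hk⟩ j ⟨0, hN⟩ r with hv0
  have hfv : fvAux k N v0 = 1 := by simp [fvAux, hv0]
  have hinv : InvJR j r v0 := Or.inl ⟨_, _, rfl⟩
  constructor
  · rw [List.Chain', List.isChain_cons]
    refine ⟨fun y hy => ?_, csuf_chain (k*N) v0 hinv (by omega)⟩
    rw [csuf_head] at hy
    cases hy
    exact .srcC ⟨0, hk⟩ j ⟨0, hN⟩ r rfl rfl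
  · rw [List.nodup_cons]
    constructor
    · intro hmem
      have := csuf_mem_fv (k*N) v0 hinv _ hmem
      rw [hfv] at this
      simp [fvAux] at this
    · exact ((csuf_pairwise (k*N) v0 hinv (by omega)).imp
        (fun {a b} hlt heq => by subst heq; omega))
  · rfl
  · rw [List.getLast?_cons, csuf_last (k*N) v0 hinv (by omega)]
    rfl

lemma canonH_length (j : Fin k) (r : Fin N) (hk : 0 < k) (hN : 0 < N) :
    (canonH k N j r).length = k * N + 2 := by
  rw [← csuf_eq_canonH hk hN j r]
  simp [csuf_length]

end DevAux6

/-- every shortest directed path from `c_j` to `d_j` in `D_int` equals the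
horizontal canonical path `Canonical(ℓ; c_j⇝d_j)` for some `ℓ ∈ [N]`. -/
theorem DInt_shortest_is_canonH (N k : ℕ) (hN : 1 ≤ N) (hk : 1 ≤ k) (j : Fin k)
    (p : List (DIntV k N))
    (hp : IsShortestDirPath (DIntE k N) (DIntV.c j) (DIntV.d j) p) :
    ∃ ℓ : Fin N, p = canonH k N j ℓ := by
  obtain ⟨hpath, hmin⟩ := hp
  have hub : p.length ≤ k * N + 2 := by
    have := hmin _ (canonH_isPath hk hN j ⟨0, hN⟩)
    rwa [canonH_length j _ hk hN] at this
  have hlb := fv_last_le (fun x y h => fvAux_le h) p _ _ hpath.chain hpath.head hpath.last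
  simp only [fvAux] at hlb
  have hplen : p.length = k * N + 2 := by omega
  have htight := tight_chain (fun x y h => fvAux_le h) p _ _ hpath.chain hpath.head
    hpath.last (by simp only [fvAux]; omega)
  cases p with
  | nil => simp at hplen
  | cons x rest =>
    have hx : x = DIntV.c j := by
      have := hpath.head
      simp only [List.head?_cons, Option.some.injEq] at this
      exact this
    subst hx
    cases rest with
    | nil => simp at hplen
    | cons y rest' =>
      rw [List.Chain', List.isChain_cons_cons] at htight
      obtain ⟨⟨hE, hfe⟩, htail⟩ := htight
      cases hE with
      | srcC i0 j q0 ℓ hi0 hq0 =>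
        refine ⟨ℓ, ?_⟩
        have hi0' : i0 = ⟨0, hk⟩ := Fin.ext hi0
        have hq0' : q0 = ⟨0, hN⟩ := Fin.ext hq0
        subst hi0' hq0'
        have heq := chain_eq_csuf (j := j) (r := ℓ) (k*N) (DIntV.grid ⟨0, hk⟩ j ⟨0, hN⟩ ℓ :: rest')
          _ htail rfl (by simp only [List.length_cons] at hplen ⊢; omega)
          (Or.inl ⟨_, _, rfl⟩)
        rw [heq, csuf_eq_canonH hk hN j ℓ]
end

section
/- For every j ∈ [k]: (i) for each r ∈ [N] the path Canonical_edge(r; c_j⇝d_j) is a shortest c_j⇝d_j path in D_edge, with exactly 3kN + 2 vertices; and (ii) every shortest directed path from c_j to d_j in D_edge is an image in D_edge of the horizontal canonical path Canonical(ℓ; c_j⇝d_j) of D_int for some ℓ ∈ [N]. -/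
/-- `(q,ℓ) ∈ S_{i,j}`: for `i = j` this means `q = ℓ` and for `i ≠ j` it means that
`v_q v_ℓ` is an edge of `G`. -/
def Split {k N : ℕ} (G : SimpleGraph (Fin N)) (i j : Fin k) (q ℓ : Fin N) : Prop :=
  (i = j ∧ q = ℓ) ∨ (i ≠ j ∧ G.Adj q ℓ)

instance {k N : ℕ} (G : SimpleGraph (Fin N)) [DecidableRel G.Adj]
    (i j : Fin k) (q ℓ : Fin N) : Decidable (Split G i j q ℓ) := by
  unfold Split; infer_instance

/-- The tags of the copies into which a grid vertex of `D_int` is split in `D_edge`. -/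
inductive ETag where
  | LB | Mid | Hor | Ver | TR
  deriving DecidableEq

/-- The vertices of the graph `D_edge` (also the vertex set of `U_edge`): each grid
vertex `w_{i,j}^{q,ℓ}` of `D_int` gives rise to copies `w_LB, w_Mid, w_Hor, w_Ver, w_TR`
(of which only `{LB, Mid, TR}`, respectively `{LB, Hor, Ver, TR}`, carry edges,
according to whether `w` is one-split or two-split), plus the terminal vertices. -/
inductive DEdgeV (k N : ℕ) where
  | grid (i j : Fin k) (q ℓ : Fin N) (t : ETag)
  | a (i : Fin k)
  | b (i : Fin k)
  | c (j : Fin k)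
  | d (j : Fin k)
  deriving DecidableEq

/-- The directed edges of `D_edge`. -/
inductive DEdgeE (k N : ℕ) (G : SimpleGraph (Fin N)) : DEdgeV k N → DEdgeV k N → Prop where
  /-- one-split: `w_LB → w_Mid` -/
  | mid1 (i j : Fin k) (q ℓ : Fin N) (h : ¬ Split G i j q ℓ) :
      DEdgeE k N G (.grid i j q ℓ .LB) (.grid i j q ℓ .Mid)
  /-- one-split: `w_Mid → w_TR` -/
  | mid2 (i j : Fin k) (q ℓ : Fin N) (h : ¬ Split G i j q ℓ) :
      DEdgeE k N G (.grid i j q ℓ .Mid) (.grid i j q ℓ .TR)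
  /-- two-split: `w_LB → w_Hor` -/
  | hor1 (i j : Fin k) (q ℓ : Fin N) (h : Split G i j q ℓ) :
      DEdgeE k N G (.grid i j q ℓ .LB) (.grid i j q ℓ .Hor)
  /-- two-split: `w_Hor → w_TR` -/
  | hor2 (i j : Fin k) (q ℓ : Fin N) (h : Split G i j q ℓ) :
      DEdgeE k N G (.grid i j q ℓ .Hor) (.grid i j q ℓ .TR)
  /-- two-split: `w_LB → w_Ver` -/
  | ver1 (i j : Fin k) (q ℓ : Fin N) (h : Split G i j q ℓ) :
      DEdgeE k N G (.grid i j q ℓ .LB) (.grid i j q ℓ .Ver)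
  /-- two-split: `w_Ver → w_TR` -/
  | ver2 (i j : Fin k) (q ℓ : Fin N) (h : Split G i j q ℓ) :
      DEdgeE k N G (.grid i j q ℓ .Ver) (.grid i j q ℓ .TR)
  /-- former edge `w_{i,j}^{q,ℓ} → w_{i,j}^{q,ℓ+1}` -/
  | up (i j : Fin k) (q ℓ ℓ' : Fin N) (h : (ℓ' : ℕ) = (ℓ : ℕ) + 1) :
      DEdgeE k N G (.grid i j q ℓ .TR) (.grid i j q ℓ' .LB)
  /-- former edge `w_{i,j}^{q,ℓ} → w_{i,j}^{q+1,ℓ}` -/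
  | right (i j : Fin k) (q q' ℓ : Fin N) (h : (q' : ℕ) = (q : ℕ) + 1) :
      DEdgeE k N G (.grid i j q ℓ .TR) (.grid i j q' ℓ .LB)
  /-- former edge `w_{i,j}^{N,ℓ} → w_{i+1,j}^{1,ℓ}` -/
  | hmatch (i i' j : Fin k) (q q' ℓ : Fin N)
      (hi : (i' : ℕ) = (i : ℕ) + 1) (hq : (q : ℕ) + 1 = N) (hq' : (q' : ℕ) = 0) :
      DEdgeE k N G (.grid i j q ℓ .TR) (.grid i' j q' ℓ .LB)
  /-- former edge `w_{i,j}^{ℓ,N} → w_{i,j+1}^{ℓ,1}` -/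
  | vmatch (i j j' : Fin k) (q ℓ ℓ' : Fin N)
      (hj : (j' : ℕ) = (j : ℕ) + 1) (hl : (ℓ : ℕ) + 1 = N) (hl' : (ℓ' : ℕ) = 0) :
      DEdgeE k N G (.grid i j q ℓ .TR) (.grid i j' q ℓ' .LB)
  /-- former edge `a_i → w_{i,1}^{q,1}` -/
  | srcA (i j : Fin k) (q ℓ : Fin N) (hj : (j : ℕ) = 0) (hl : (ℓ : ℕ) = 0) :
      DEdgeE k N G (.a i) (.grid i j q ℓ .LB)
  /-- former edge `w_{i,k}^{q,N} → b_i` -/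
  | snkB (i j : Fin k) (q ℓ : Fin N) (hj : (j : ℕ) + 1 = k) (hl : (ℓ : ℕ) + 1 = N) :
      DEdgeE k N G (.grid i j q ℓ .TR) (.b i)
  /-- former edge `c_j → w_{1,j}^{1,ℓ}` -/
  | srcC (i j : Fin k) (q ℓ : Fin N) (hi : (i : ℕ) = 0) (hq : (q : ℕ) = 0) :
      DEdgeE k N G (.c j) (.grid i j q ℓ .LB)
  /-- former edge `w_{k,j}^{N,ℓ} → d_j` -/
  | snkD (i j : Fin k) (q ℓ : Fin N) (hi : (i : ℕ) + 1 = k) (hq : (q : ℕ) + 1 = N) :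
      DEdgeE k N G (.grid i j q ℓ .TR) (.d j)

/-- The three vertices `w_LB, w_?, w_TR` replacing a grid vertex `w` on (the image of)
a canonical path: the middle vertex is `w_Mid` if `w` is one-split, and is chosen among
`w_Hor` / `w_Ver` (according to `b`) if `w` is two-split. -/
def eTriple {k N : ℕ} (G : SimpleGraph (Fin N)) [DecidableRel G.Adj]
    (i j : Fin k) (q ℓ : Fin N) (b : Bool) : List (DEdgeV k N) :=
  [DEdgeV.grid i j q ℓ ETag.LB,
   DEdgeV.grid i j q ℓ
     (if Split G i j q ℓ then (if b then ETag.Hor else ETag.Ver) else ETag.Mid),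
   DEdgeV.grid i j q ℓ ETag.TR]

/-- An image in `D_edge`/`U_edge` of the horizontal canonical path
`Canonical(r; c_j⇝d_j)` of `D_int`, determined by a choice `χ` of `Hor`/`Ver`
at each two-split vertex. -/
def imageH {k N : ℕ} (G : SimpleGraph (Fin N)) [DecidableRel G.Adj]
    (χ : Fin k → Fin N → Bool) (j : Fin k) (r : Fin N) : List (DEdgeV k N) :=
  DEdgeV.c j ::
    (((List.finRange k).flatMap fun i =>
        (List.finRange N).flatMap fun q => eTriple G i j q r (χ i q)) ++ [DEdgeV.d j])

/-- An image in `D_edge`/`U_edge` of the vertical canonical path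
`Canonical(r; a_i⇝b_i)` of `D_int`, determined by a choice `χ` of `Hor`/`Ver`
at each two-split vertex. -/
def imageV {k N : ℕ} (G : SimpleGraph (Fin N)) [DecidableRel G.Adj]
    (χ : Fin k → Fin N → Bool) (i : Fin k) (r : Fin N) : List (DEdgeV k N) :=
  DEdgeV.a i ::
    (((List.finRange k).flatMap fun j =>
        (List.finRange N).flatMap fun ℓ => eTriple G i j r ℓ (χ j ℓ)) ++ [DEdgeV.b i])

/-- `Canonical_edge(r; c_j⇝d_j)`: the image of `Canonical(r; c_j⇝d_j)` choosing
`w_LB → w_Hor → w_TR` at every two-split vertex. -/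
def canonEdgeH {k N : ℕ} (G : SimpleGraph (Fin N)) [DecidableRel G.Adj]
    (j : Fin k) (r : Fin N) : List (DEdgeV k N) :=
  imageH G (fun _ _ => true) j r

/-- `Canonical_edge(r; a_i⇝b_i)`: the image of `Canonical(r; a_i⇝b_i)` choosing
`w_LB → w_Ver → w_TR` at every two-split vertex. -/
def canonEdgeV {k N : ℕ} (G : SimpleGraph (Fin N)) [DecidableRel G.Adj]
    (i : Fin k) (r : Fin N) : List (DEdgeV k N) :=
  imageV G (fun _ _ => false) i r

section Aux
variable {k N : ℕ}

/-- numeric value of a tag -/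
def tagv : ETag → ℤ
  | .LB => 0
  | .TR => 2
  | _ => 1

/-- potential function on `DEdgeV` -/
def mu (k N : ℕ) : DEdgeV k N → ℤ
  | .grid i _ q _ t => 3 * (((i : ℕ) * N + (q : ℕ) : ℕ) : ℤ) + tagv t + 1
  | .c _ => 0
  | .d _ => 3 * ((k * N : ℕ) : ℤ) + 1
  | .a _ => 3 * ((k * N : ℕ) : ℤ) + 5
  | .b _ => 0

lemma pos_lt (i : Fin k) (q : Fin N) : (i : ℕ) * N + (q : ℕ) < k * N := by
  have h1 : (i : ℕ) * N + (q : ℕ) < (i : ℕ) * N + N := by have := q.2; omega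
  have h2 : ((i : ℕ) + 1) * N ≤ k * N := Nat.mul_le_mul_right N i.2
  have h3 : ((i : ℕ) + 1) * N = (i : ℕ) * N + N := Nat.succ_mul _ _
  omega

lemma pos_last {i q : ℕ} (hN : 1 ≤ N) (hik : i < k) (hq : q < N)
    (h : i * N + q + 1 = k * N) : i + 1 = k ∧ q + 1 = N := by
  have h2 : k * N ≤ (i + 1) * N := by
    have h3 : (i + 1) * N = i * N + N := Nat.succ_mul _ _
    omega
  have h4 : k ≤ i + 1 := Nat.le_of_mul_le_mul_right h2 (by omega)
  have h5 : i + 1 = k := by omega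
  have h3 : (i + 1) * N = i * N + N := Nat.succ_mul _ _
  rw [h5] at h3
  omega

lemma mu_step {G : SimpleGraph (Fin N)} {x y : DEdgeV k N}
    (h : DEdgeE k N G x y) : mu k N y ≤ mu k N x + 1 := by
  cases h with
  | mid1 i j q ℓ h => simp only [mu, tagv]; omega
  | mid2 i j q ℓ h => simp only [mu, tagv]; omega
  | hor1 i j q ℓ h => simp only [mu, tagv]; omega
  | hor2 i j q ℓ h => simp only [mu, tagv]; omega
  | ver1 i j q ℓ h => simp only [mu, tagv]; omega
  | ver2 i j q ℓ h => simp only [mu, tagv]; omega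
  | up i j q ℓ ℓ' h => simp only [mu, tagv]; omega
  | right i j q q' ℓ h => simp only [mu, tagv]; omega
  | hmatch i i' j q q' ℓ hi hq hq' =>
      simp only [mu, tagv]
      have h3 : ((i : ℕ) + 1) * N = (i : ℕ) * N + N := Nat.succ_mul _ _
      have h4 : (i' : ℕ) * N = ((i : ℕ) + 1) * N := by rw [hi]
      omega
  | vmatch i j j' q ℓ ℓ' hj hl hl' => simp only [mu, tagv]; omega
  | srcA i j q ℓ hj hl =>
      simp only [mu, tagv]
      have := pos_lt i q
      omega
  | snkB i j q ℓ hj hl =>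
      simp only [mu, tagv]
      have : (0:ℤ) ≤ (((i : ℕ) * N + (q : ℕ) : ℕ) : ℤ) := Int.natCast_nonneg _
      omega
  | srcC i j q ℓ hi hq =>
      simp only [mu, tagv]
      have h4 : (i : ℕ) * N = 0 := by rw [hi]; ring
      omega
  | snkD i j q ℓ hi hq =>
      simp only [mu, tagv]
      have h3 : ((i : ℕ) + 1) * N = (i : ℕ) * N + N := Nat.succ_mul _ _
      have h4 : ((i : ℕ) + 1) * N = k * N := by rw [hi]
      omega

lemma mu_chain {G : SimpleGraph (Fin N)} :
    ∀ (p : List (DEdgeV k N)), p.Chain' (DEdgeE k N G) → ∀ x y,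
      p.head? = some x → p.getLast? = some y →
      mu k N y + 1 ≤ mu k N x + p.length := by
  intro p
  induction p with
  | nil => intro _ x y hx; simp at hx
  | cons a t ih =>
    intro hc x y hx hy
    cases t with
    | nil =>
      simp at hx hy
      subst hx; subst hy
      simp
    | cons b t' =>
      unfold List.Chain' at hc
      rw [List.isChain_cons_cons] at hc
      simp only [List.head?_cons, Option.some.injEq] at hx
      subst hx
      rw [List.getLast?_cons_cons] at hy
      have h1 := ih hc.2 b y rfl hy
      have h2 := mu_step hc.1
      simp only [List.length_cons] at *
      push_cast at *
      omega

end Aux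
section Rest
variable {k N : ℕ} (G : SimpleGraph (Fin N)) [DecidableRel G.Adj]

/-- the suffix of an image path starting at grid position `(i,q)`,
with `n` triples remaining. -/
def rest (χ : Fin k → Fin N → Bool) (j : Fin k) (ℓ : Fin N) :
    ℕ → Fin k → Fin N → List (DEdgeV k N)
  | 0, _, _ => [DEdgeV.d j]
  | n+1, i, q =>
      eTriple G i j q ℓ (χ i q) ++
        (if hq : (q : ℕ) + 1 < N then rest χ j ℓ n i ⟨(q : ℕ) + 1, hq⟩
         else if hi : (i : ℕ) + 1 < k then rest χ j ℓ n ⟨(i : ℕ) + 1, hi⟩ ⟨0, q.pos⟩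
         else rest χ j ℓ n i q)

variable {χ : Fin k → Fin N → Bool} {j : Fin k} {ℓ : Fin N}

lemma rest_zero (i : Fin k) (q : Fin N) : rest G χ j ℓ 0 i q = [DEdgeV.d j] := rfl

lemma rest_ne_nil (n : ℕ) (i : Fin k) (q : Fin N) : rest G χ j ℓ n i q ≠ [] := by
  cases n <;> simp [rest, eTriple]

lemma rest_head (n : ℕ) (hn : n ≠ 0) (i : Fin k) (q : Fin N) :
    (rest G χ j ℓ n i q).head? = some (DEdgeV.grid i j q ℓ ETag.LB) := by
  cases n with
  | zero => exact absurd rfl hn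
  | succ m => simp [rest, eTriple]

lemma rest_last (n : ℕ) (i : Fin k) (q : Fin N) :
    (rest G χ j ℓ n i q).getLast? = some (DEdgeV.d j) := by
  induction n generalizing i q with
  | zero => rfl
  | succ m ih =>
    show (eTriple G i j q ℓ (χ i q) ++ _).getLast? = _
    rw [List.getLast?_append]
    split_ifs <;> rw [ih] <;> rfl

lemma rest_mem (n : ℕ) : ∀ (i : Fin k) (q : Fin N),
    (i : ℕ) * N + (q : ℕ) + n = k * N →
    ∀ x ∈ rest G χ j ℓ n i q, x = DEdgeV.d j ∨
      ∃ (a : Fin k) (b : Fin N) (t : ETag),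
        x = DEdgeV.grid a j b ℓ t ∧ (i : ℕ) * N + (q : ℕ) ≤ (a : ℕ) * N + (b : ℕ) := by
  induction n with
  | zero =>
    intro i q _ x hx
    simp [rest] at hx
    exact Or.inl hx
  | succ m ih =>
    intro i q hpos x hx
    simp only [rest] at hx
    rw [List.mem_append] at hx
    rcases hx with hx | hx
    · simp only [eTriple, List.mem_cons, List.not_mem_nil, or_false] at hx
      rcases hx with rfl | rfl | rfl
      · exact Or.inr ⟨i, q, _, rfl, le_rfl⟩
      · exact Or.inr ⟨i, q, _, rfl, le_rfl⟩
      · exact Or.inr ⟨i, q, _, rfl, le_rfl⟩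
    · split_ifs at hx with h1 h2
      · have := ih i ⟨(q : ℕ) + 1, h1⟩ (by simp; omega) x hx
        rcases this with h | ⟨a, b, t, rfl, hle⟩
        · exact Or.inl h
        · exact Or.inr ⟨a, b, t, rfl, by simp at hle; omega⟩
      · have hq1 : (q : ℕ) + 1 = N := by have := q.2; omega
        have hstep : ((i : ℕ) + 1) * N = (i : ℕ) * N + N := Nat.succ_mul _ _
        have := ih ⟨(i : ℕ) + 1, h2⟩ ⟨0, q.pos⟩ (by simp; omega) x hx
        rcases this with h | ⟨a, b, t, rfl, hle⟩
        · exact Or.inl h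
        · exact Or.inr ⟨a, b, t, rfl, by simp at hle; omega⟩
      · -- last position: i+1 = k, q+1 = N, hence m = 0
        have hq1 : (q : ℕ) + 1 = N := by have := q.2; omega
        have hi1 : (i : ℕ) + 1 = k := by have := i.2; omega
        have hstep : ((i : ℕ) + 1) * N = (i : ℕ) * N + N := Nat.succ_mul _ _
        have hkn : ((i : ℕ) + 1) * N = k * N := by rw [hi1]
        have hm : m = 0 := by omega
        subst hm
        simp [rest] at hx
        exact Or.inl hx

lemma eTriple_nodup (i : Fin k) (q : Fin N) (b : Bool) :
    (eTriple G i j q ℓ b).Nodup := by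
  simp only [eTriple]
  split_ifs <;> simp

lemma rest_nodup (n : ℕ) : ∀ (i : Fin k) (q : Fin N),
    (i : ℕ) * N + (q : ℕ) + n = k * N → (rest G χ j ℓ n i q).Nodup := by
  induction n with
  | zero => intro i q _; simp [rest]
  | succ m ih =>
    intro i q hpos
    show (eTriple G i j q ℓ (χ i q) ++ _).Nodup
    rw [List.nodup_append]
    refine ⟨eTriple_nodup G i q _, ?_, ?_⟩
    · -- nodup of the branch
      split_ifs with h1 h2
      · exact ih i ⟨(q : ℕ) + 1, h1⟩ (by simp; omega)
      · have hq1 : (q : ℕ) + 1 = N := by have := q.2; omega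
        have hstep : ((i : ℕ) + 1) * N = (i : ℕ) * N + N := Nat.succ_mul _ _
        exact ih ⟨(i : ℕ) + 1, h2⟩ ⟨0, q.pos⟩ (by simp; omega)
      · have hq1 : (q : ℕ) + 1 = N := by have := q.2; omega
        have hi1 : (i : ℕ) + 1 = k := by have := i.2; omega
        have hstep : ((i : ℕ) + 1) * N = (i : ℕ) * N + N := Nat.succ_mul _ _
        have hkn : ((i : ℕ) + 1) * N = k * N := by rw [hi1]
        have hm : m = 0 := by omega
        subst hm; simp [rest]
    · -- disjointness
      intro x hx
      have hmem : ∀ y ∈ (if hq : (q : ℕ) + 1 < N then rest G χ j ℓ m i ⟨(q : ℕ) + 1, hq⟩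
          else if hi : (i : ℕ) + 1 < k then rest G χ j ℓ m ⟨(i : ℕ) + 1, hi⟩ ⟨0, q.pos⟩
          else rest G χ j ℓ m i q), y = DEdgeV.d j ∨
          ∃ (a : Fin k) (b : Fin N) (t : ETag),
            y = DEdgeV.grid a j b ℓ t ∧ (i : ℕ) * N + (q : ℕ) + 1 ≤ (a : ℕ) * N + (b : ℕ) := by
        intro y hy
        split_ifs at hy with h1 h2
        · have := rest_mem G m i ⟨(q : ℕ) + 1, h1⟩ (by simp; omega) y hy
          rcases this with h | ⟨a, b, t, rfl, hle⟩
          · exact Or.inl h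
          · exact Or.inr ⟨a, b, t, rfl, by simp at hle; omega⟩
        · have hq1 : (q : ℕ) + 1 = N := by have := q.2; omega
          have hstep : ((i : ℕ) + 1) * N = (i : ℕ) * N + N := Nat.succ_mul _ _
          have := rest_mem G m ⟨(i : ℕ) + 1, h2⟩ ⟨0, q.pos⟩ (by simp; omega) y hy
          rcases this with h | ⟨a, b, t, rfl, hle⟩
          · exact Or.inl h
          · exact Or.inr ⟨a, b, t, rfl, by simp at hle; omega⟩
        · have hq1 : (q : ℕ) + 1 = N := by have := q.2; omega
          have hi1 : (i : ℕ) + 1 = k := by have := i.2; omega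
          have hstep : ((i : ℕ) + 1) * N = (i : ℕ) * N + N := Nat.succ_mul _ _
          have hkn : ((i : ℕ) + 1) * N = k * N := by rw [hi1]
          have hm : m = 0 := by omega
          subst hm; simp [rest] at hy
          exact Or.inl hy
      intro y hx2 hxy
      subst hxy
      have := hmem x hx2
      simp only [eTriple, List.mem_cons, List.not_mem_nil, or_false] at hx
      rcases hx with rfl | rfl | rfl <;>
        rcases this with h | ⟨a, b, t, heq, hle⟩ <;>
          first
          | exact absurd h (by simp)
          | (injection heq with h1 h2 h3 h4 h5
             subst h1; subst h3
             omega)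

end Rest
section Chain
variable {k N : ℕ} (G : SimpleGraph (Fin N)) [DecidableRel G.Adj]
variable {χ : Fin k → Fin N → Bool} {j : Fin k} {ℓ : Fin N}

lemma eTriple_chain (i : Fin k) (q : Fin N) (b : Bool) :
    (eTriple G i j q ℓ b).Chain' (DEdgeE k N G) := by
  by_cases h : Split G i j q ℓ
  · cases b <;> simp only [eTriple, if_pos h, if_neg, List.Chain', List.isChain_cons_cons,
      List.isChain_singleton, and_true]
    · exact ⟨DEdgeE.ver1 i j q ℓ h, DEdgeE.ver2 i j q ℓ h⟩
    · exact ⟨DEdgeE.hor1 i j q ℓ h, DEdgeE.hor2 i j q ℓ h⟩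
  · simp only [eTriple, if_neg h, List.Chain', List.isChain_cons_cons, List.isChain_singleton, and_true]
    exact ⟨DEdgeE.mid1 i j q ℓ h, DEdgeE.mid2 i j q ℓ h⟩

lemma eTriple_last (i : Fin k) (q : Fin N) (b : Bool) :
    (eTriple G i j q ℓ b).getLast? = some (DEdgeV.grid i j q ℓ ETag.TR) := rfl

lemma eTriple_head (i : Fin k) (q : Fin N) (b : Bool) :
    (eTriple G i j q ℓ b).head? = some (DEdgeV.grid i j q ℓ ETag.LB) := rfl

lemma rest_chain (hN : 1 ≤ N) (n : ℕ) : ∀ (i : Fin k) (q : Fin N),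
    (i : ℕ) * N + (q : ℕ) + n = k * N →
    (rest G χ j ℓ n i q).Chain' (DEdgeE k N G) := by
  induction n with
  | zero => intro i q _; simp [rest, List.Chain']
  | succ m ih =>
    intro i q hpos
    simp only [rest, List.Chain']
    rw [List.isChain_append]
    refine ⟨eTriple_chain G i q _, ?_, ?_⟩
    · split_ifs with h1 h2
      · exact ih i ⟨(q : ℕ) + 1, h1⟩ (by simp; omega)
      · have hq1 : (q : ℕ) + 1 = N := by have := q.2; omega
        have hstep : ((i : ℕ) + 1) * N = (i : ℕ) * N + N := Nat.succ_mul _ _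
        exact ih ⟨(i : ℕ) + 1, h2⟩ ⟨0, q.pos⟩ (by simp; omega)
      · have hq1 : (q : ℕ) + 1 = N := by have := q.2; omega
        have hi1 : (i : ℕ) + 1 = k := by have := i.2; omega
        have hstep : ((i : ℕ) + 1) * N = (i : ℕ) * N + N := Nat.succ_mul _ _
        have hkn : ((i : ℕ) + 1) * N = k * N := by rw [hi1]
        have hm : m = 0 := by omega
        subst hm; simp [rest]
    · intro x hx y hy
      rw [eTriple_last] at hx
      simp only [Option.mem_def, Option.some.injEq] at hx
      subst hx
      cases m with
      | zero =>
        -- branch is [d j] in every case; edge is snkD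
        have hlast : (i : ℕ) * N + (q : ℕ) + 1 = k * N := hpos
        have hl := pos_last (k := k) hN i.2 q.2 hlast
        have h1 : ¬ ((q : ℕ) + 1 < N) := by omega
        have h2 : ¬ ((i : ℕ) + 1 < k) := by omega
        rw [dif_neg h1, dif_neg h2] at hy
        simp only [rest, List.head?_cons, Option.mem_def, Option.some.injEq] at hy
        subst hy
        exact DEdgeE.snkD i j q ℓ hl.1 hl.2
      | succ m' =>
        split_ifs at hy with h1 h2
        · rw [rest_head G _ (by omega)] at hy
          simp only [Option.mem_def, Option.some.injEq] at hy
          subst hy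
          exact DEdgeE.right i j q ⟨(q : ℕ) + 1, h1⟩ ℓ rfl
        · rw [rest_head G _ (by omega)] at hy
          simp only [Option.mem_def, Option.some.injEq] at hy
          subst hy
          have hq1 : (q : ℕ) + 1 = N := by have := q.2; omega
          exact DEdgeE.hmatch i ⟨(i : ℕ) + 1, h2⟩ j q ⟨0, q.pos⟩ ℓ rfl hq1 rfl
        · have hq1 : (q : ℕ) + 1 = N := by have := q.2; omega
          have hi1 : (i : ℕ) + 1 = k := by have := i.2; omega
          have hstep : ((i : ℕ) + 1) * N = (i : ℕ) * N + N := Nat.succ_mul _ _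
          have hkn : ((i : ℕ) + 1) * N = k * N := by rw [hi1]
          omega

lemma rest_congr {χ' : Fin k → Fin N → Bool} (n : ℕ) : ∀ (i : Fin k) (q : Fin N),
    (i : ℕ) * N + (q : ℕ) + n = k * N →
    (∀ (a : Fin k) (b : Fin N), (i : ℕ) * N + (q : ℕ) ≤ (a : ℕ) * N + (b : ℕ) →
      χ a b = χ' a b) →
    rest G χ j ℓ n i q = rest G χ' j ℓ n i q := by
  induction n with
  | zero => intro i q _ _; rfl
  | succ m ih =>
    intro i q hpos hagree
    simp only [rest]
    rw [hagree i q le_rfl]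
    congr 1
    cases m with
    | zero => split_ifs <;> rfl
    | succ m' =>
      split_ifs with h1 h2
      · refine ih i ⟨(q : ℕ) + 1, h1⟩ (by simp; omega) ?_
        intro a b hab
        exact hagree a b (by simp at hab ⊢; omega)
      · have hq1 : (q : ℕ) + 1 = N := by have := q.2; omega
        have hstep : ((i : ℕ) + 1) * N = (i : ℕ) * N + N := Nat.succ_mul _ _
        refine ih ⟨(i : ℕ) + 1, h2⟩ ⟨0, q.pos⟩ (by simp; omega) ?_
        intro a b hab
        exact hagree a b (by simp at hab ⊢; omega)
      · have hq1 : (q : ℕ) + 1 = N := by have := q.2; omega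
        have hi1 : (i : ℕ) + 1 = k := by have := i.2; omega
        have hstep : ((i : ℕ) + 1) * N = (i : ℕ) * N + N := Nat.succ_mul _ _
        have hkn : ((i : ℕ) + 1) * N = k * N := by rw [hi1]
        omega

end Chain
section Link
variable {k N : ℕ} (G : SimpleGraph (Fin N)) [DecidableRel G.Adj]
variable {χ : Fin k → Fin N → Bool} {j : Fin k} {ℓ : Fin N}

lemma drop_finRange (n qv : ℕ) (h : qv < n) :
    (List.finRange n).drop qv = ⟨qv, h⟩ :: (List.finRange n).drop (qv + 1) := by
  rw [List.drop_eq_getElem_cons (by simpa using h)]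
  congr 1
  simp [List.getElem_finRange, Fin.cast]

lemma claim1 (t : ℕ) : ∀ (i : Fin k) (qv : ℕ) (hlt : qv < N), qv + t = N →
    rest G χ j ℓ (t + (k - 1 - (i : ℕ)) * N) i ⟨qv, hlt⟩ =
      ((List.finRange N).drop qv).flatMap (fun q' => eTriple G i j q' ℓ (χ i q')) ++
        (if hi : (i : ℕ) + 1 < k then
          rest G χ j ℓ ((k - 1 - (i : ℕ)) * N) ⟨(i : ℕ) + 1, hi⟩ ⟨0, by omega⟩
         else [DEdgeV.d j]) := by
  induction t with
  | zero => intro i qv hlt h; omega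
  | succ t ih =>
    intro i qv hlt h
    rw [drop_finRange N qv hlt, List.flatMap_cons, List.append_assoc]
    rw [show t + 1 + (k - 1 - (i : ℕ)) * N = (t + (k - 1 - (i : ℕ)) * N) + 1 by omega]
    simp only [rest]
    congr 1
    cases t with
    | zero =>
      -- qv + 1 = N
      have hq1 : qv + 1 = N := h
      rw [dif_neg (by omega : ¬ qv + 1 < N)]
      have hdrop : (List.finRange N).drop (qv + 1) = [] := by
        apply List.drop_eq_nil_of_le; simp [hq1]
      rw [hdrop, List.flatMap_nil, List.nil_append]
      simp only [Nat.zero_add]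
      split_ifs with h2
      · rfl
      · have hi1 : (i : ℕ) + 1 = k := by have := i.2; omega
        have : (k - 1 - (i : ℕ)) = 0 := by omega
        rw [this, Nat.zero_mul]
        rfl
    | succ t' =>
      have hlt2 : qv + 1 < N := by omega
      rw [dif_pos hlt2]
      rw [ih i (qv + 1) hlt2 (by omega)]

lemma claim2 (hN : 1 ≤ N) (s : ℕ) : ∀ (i : Fin k), (i : ℕ) + s = k →
    rest G χ j ℓ (s * N) i ⟨0, by omega⟩ =
      ((List.finRange k).drop i).flatMap
        (fun i' => (List.finRange N).flatMap fun q' => eTriple G i' j q' ℓ (χ i' q')) ++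
        [DEdgeV.d j] := by
  induction s with
  | zero => intro i h; have := i.2; omega
  | succ s ih =>
    intro i h
    have hs : k - 1 - (i : ℕ) = s := by have := i.2; omega
    have harg : (s + 1) * N = N + (k - 1 - (i : ℕ)) * N := by
      rw [hs, Nat.succ_mul]; omega
    rw [harg, claim1 G N i 0 (by omega) (by omega)]
    rw [drop_finRange k (i : ℕ) i.2, List.flatMap_cons, List.append_assoc]
    have hdrop0 : (List.finRange N).drop 0 = List.finRange N := rfl
    rw [hdrop0]
    have : (⟨(i : ℕ), i.2⟩ : Fin k) = i := rfl
    rw [this]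
    congr 1
    split_ifs with h2
    · simp only [hs]
      rw [ih ⟨(i : ℕ) + 1, h2⟩ (by simp; omega)]
    · have hi1 : (i : ℕ) + 1 = k := by have := i.2; omega
      have : (List.finRange k).drop ((i : ℕ) + 1) = [] := by
        apply List.drop_eq_nil_of_le; simp [hi1]
      rw [this, List.flatMap_nil, List.nil_append]

lemma claimA (hN : 1 ≤ N) (hk : 1 ≤ k) :
    imageH G χ j ℓ = DEdgeV.c j :: rest G χ j ℓ (k * N) ⟨0, by omega⟩ ⟨0, by omega⟩ := by
  rw [show k * N = k * N from rfl]
  have := claim2 G (χ := χ) (j := j) (ℓ := ℓ) hN k ⟨0, by omega⟩ (by simp)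
  rw [show (rest G χ j ℓ (k * N) ⟨0, by omega⟩ ⟨0, by omega⟩ : List (DEdgeV k N))
      = rest G χ j ℓ (k * N) ⟨0, by omega⟩ ⟨0, by omega⟩ from rfl]
  rw [this]
  simp [imageH]

lemma imageH_length (hN : 1 ≤ N) (hk : 1 ≤ k) :
    (imageH G χ j ℓ).length = 3 * k * N + 2 := by
  simp only [imageH, List.length_cons, List.length_append, List.length_flatMap,
    List.length_singleton, Function.comp]
  have h1 : ∀ i : Fin k,
      ((List.finRange N).flatMap fun q => eTriple G i j q ℓ (χ i q)).length = N * 3 := by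
    intro i
    rw [List.length_flatMap]
    have : (List.map (List.length ∘ fun q => eTriple G i j q ℓ (χ i q)) (List.finRange N))
        = List.replicate N 3 := by
      rw [show (List.length ∘ fun q => eTriple G i j q ℓ (χ i q)) = fun _ => 3 from rfl]
      simp [List.map_const]
    simp only [Function.comp_def] at this
    rw [this, List.sum_replicate]
    simp [Nat.mul_comm]
  have h2 : (List.map (List.length ∘ fun i =>
      (List.finRange N).flatMap fun q => eTriple G i j q ℓ (χ i q)) (List.finRange k))
      = List.replicate k (N * 3) := by
    rw [List.map_congr_left (fun i _ => by simp only [Function.comp]; exact h1 i)]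
    simp [List.map_const]
  simp only [List.length_flatMap, Function.comp_def] at h2
  rw [h2, List.sum_replicate, smul_eq_mul]
  have : k * (N * 3) = 3 * k * N := by ring
  simp only [List.length_nil]
  omega

end Link
section Main
variable {k N : ℕ} (G : SimpleGraph (Fin N)) [DecidableRel G.Adj] {j : Fin k}

lemma invLB {i : Fin k} {q ℓ : Fin N} {y : DEdgeV k N}
    (h : DEdgeE k N G (.grid i j q ℓ .LB) y) :
    ∃ t : ETag, y = .grid i j q ℓ t ∧
      ((¬ Split G i j q ℓ ∧ t = .Mid) ∨ (Split G i j q ℓ ∧ (t = .Hor ∨ t = .Ver))) := by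
  cases h with
  | mid1 _ _ _ _ h => exact ⟨_, rfl, Or.inl ⟨h, rfl⟩⟩
  | hor1 _ _ _ _ h => exact ⟨_, rfl, Or.inr ⟨h, Or.inl rfl⟩⟩
  | ver1 _ _ _ _ h => exact ⟨_, rfl, Or.inr ⟨h, Or.inr rfl⟩⟩

lemma invMid {i : Fin k} {q ℓ : Fin N} {t : ETag} {y : DEdgeV k N}
    (ht : t = ETag.Mid ∨ t = ETag.Hor ∨ t = ETag.Ver)
    (h : DEdgeE k N G (.grid i j q ℓ t) y) : y = .grid i j q ℓ .TR := by
  cases h <;> first | rfl | simp at ht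

lemma rest_succ' {χ : Fin k → Fin N → Bool} {ℓ : Fin N} (n : ℕ) (i : Fin k) (q : Fin N) :
    rest G χ j ℓ (n + 1) i q = eTriple G i j q ℓ (χ i q) ++
      (if hq : (q : ℕ) + 1 < N then rest G χ j ℓ n i ⟨(q : ℕ) + 1, hq⟩
       else if hi : (i : ℕ) + 1 < k then rest G χ j ℓ n ⟨(i : ℕ) + 1, hi⟩ ⟨0, q.pos⟩
       else rest G χ j ℓ n i q) := rfl

lemma rest_one (χ : Fin k → Fin N → Bool) (ℓ : Fin N) (i : Fin k) (q : Fin N) :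
    rest G χ j ℓ 1 i q = eTriple G i j q ℓ (χ i q) ++ [DEdgeV.d j] := by
  simp only [rest]
  split_ifs <;> rfl

lemma main_lemma (hN : 1 ≤ N) (n : ℕ) : ∀ (p : List (DEdgeV k N)) (i : Fin k) (q ℓ : Fin N),
    p.Chain' (DEdgeE k N G) →
    p.head? = some (DEdgeV.grid i j q ℓ ETag.LB) →
    p.getLast? = some (DEdgeV.d j) →
    (i : ℕ) * N + (q : ℕ) + n + 1 = k * N →
    p.length = 3 * n + 4 →
    ∃ χ : Fin k → Fin N → Bool, p = rest G χ j ℓ (n + 1) i q := by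
  induction n with
  | zero =>
    intro p i q ℓ hc hh hl hpos hlen
    rcases p with _ | ⟨x0, p1⟩
    · simp at hh
    rcases p1 with _ | ⟨x1, p2⟩
    · simp only [List.length_cons, List.length_nil] at hlen; omega
    rcases p2 with _ | ⟨x2, p3⟩
    · simp only [List.length_cons, List.length_nil] at hlen; omega
    rcases p3 with _ | ⟨y, t⟩
    · simp only [List.length_cons, List.length_nil] at hlen; omega
    simp only [List.head?_cons, Option.some.injEq] at hh
    subst hh
    unfold List.Chain' at hc
    rw [List.isChain_cons_cons] at hc
    obtain ⟨e01, hc⟩ := hc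
    rw [List.isChain_cons_cons] at hc
    obtain ⟨e12, hc⟩ := hc
    rw [List.isChain_cons_cons] at hc
    obtain ⟨e2y, hct⟩ := hc
    rw [List.getLast?_cons_cons, List.getLast?_cons_cons, List.getLast?_cons_cons] at hl
    simp only [List.length_cons] at hlen
    obtain ⟨tmid, rfl, hcase⟩ := invLB G e01
    have ht : tmid = ETag.Mid ∨ tmid = ETag.Hor ∨ tmid = ETag.Ver := by tauto
    have hx2 := invMid G ht e12
    subst hx2
    have hlast := pos_last (k := k) hN i.2 q.2 (by omega)
    cases e2y with
    | up _ _ _ _ ℓ'' h =>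
      have hb := mu_chain (G := G) _ hct _ _ rfl hl
      simp only [mu, tagv, List.length_cons] at hb
      exfalso
      push_cast at hb
      omega
    | vmatch _ _ j'' _ _ ℓ'' hj hlv hl' =>
      have hb := mu_chain (G := G) _ hct _ _ rfl hl
      simp only [mu, tagv, List.length_cons] at hb
      exfalso
      push_cast at hb
      omega
    | snkB _ _ _ _ hj hlv =>
      rcases t with _ | ⟨z, t'⟩
      · simp at hl
      · rw [List.isChain_cons_cons] at hct
        cases hct.1
    | right _ _ _ q'' _ h =>
      exfalso
      have := q''.2
      omega
    | hmatch _ i'' _ _ q'' _ hi'' hqv hq'' =>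
      exfalso
      have := i''.2
      omega
    | snkD _ _ _ _ hik hqN =>
      -- t = []
      have htn : t = [] := by
        cases t with
        | nil => rfl
        | cons z t' =>
          rw [List.isChain_cons_cons] at hct
          cases hct.1
      subst htn
      rcases hcase with ⟨hns, rfl⟩ | ⟨hs, rfl | rfl⟩
      · exact ⟨fun _ _ => true, by rw [rest_one]; simp [eTriple, if_neg hns]⟩
      · exact ⟨fun _ _ => true, by rw [rest_one]; simp [eTriple, if_pos hs]⟩
      · exact ⟨fun _ _ => false, by rw [rest_one]; simp [eTriple, if_pos hs]⟩
  | succ m ih =>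
    intro p i q ℓ hc hh hl hpos hlen
    rcases p with _ | ⟨x0, p1⟩
    · simp at hh
    rcases p1 with _ | ⟨x1, p2⟩
    · simp only [List.length_cons, List.length_nil] at hlen; omega
    rcases p2 with _ | ⟨x2, p3⟩
    · simp only [List.length_cons, List.length_nil] at hlen; omega
    rcases p3 with _ | ⟨y, t⟩
    · simp only [List.length_cons, List.length_nil] at hlen; omega
    simp only [List.head?_cons, Option.some.injEq] at hh
    subst hh
    unfold List.Chain' at hc
    rw [List.isChain_cons_cons] at hc
    obtain ⟨e01, hc⟩ := hc
    rw [List.isChain_cons_cons] at hc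
    obtain ⟨e12, hc⟩ := hc
    rw [List.isChain_cons_cons] at hc
    obtain ⟨e2y, hct⟩ := hc
    rw [List.getLast?_cons_cons, List.getLast?_cons_cons, List.getLast?_cons_cons] at hl
    simp only [List.length_cons] at hlen
    obtain ⟨tmid, rfl, hcase⟩ := invLB G e01
    have ht : tmid = ETag.Mid ∨ tmid = ETag.Hor ∨ tmid = ETag.Ver := by tauto
    have hx2 := invMid G ht e12
    subst hx2
    obtain ⟨bsel, hmid⟩ : ∃ b : Bool,
        (if Split G i j q ℓ then (if b then ETag.Hor else ETag.Ver) else ETag.Mid) = tmid := by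
      rcases hcase with ⟨hns, rfl⟩ | ⟨hs, rfl | rfl⟩
      · exact ⟨true, if_neg hns⟩
      · exact ⟨true, by rw [if_pos hs]; rfl⟩
      · exact ⟨false, by rw [if_pos hs]; rfl⟩
    cases e2y with
    | up _ _ _ _ ℓ'' h =>
      have hb := mu_chain (G := G) _ hct _ _ rfl hl
      simp only [mu, tagv, List.length_cons] at hb
      exfalso
      push_cast at hb
      omega
    | vmatch _ _ j'' _ _ ℓ'' hj hlv hl' =>
      have hb := mu_chain (G := G) _ hct _ _ rfl hl
      simp only [mu, tagv, List.length_cons] at hb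
      exfalso
      push_cast at hb
      omega
    | snkB _ _ _ _ hj hlv =>
      rcases t with _ | ⟨z, t'⟩
      · simp at hl
      · rw [List.isChain_cons_cons] at hct
        cases hct.1
    | snkD _ _ _ _ hik hqN =>
      exfalso
      have hstep : ((i : ℕ) + 1) * N = (i : ℕ) * N + N := Nat.succ_mul _ _
      have hkn : ((i : ℕ) + 1) * N = k * N := by rw [hik]
      omega
    | right _ _ _ q'' _ hq'' =>
      have hlt : (q : ℕ) + 1 < N := by have := q''.2; omega
      obtain ⟨χ', heq⟩ := ih (DEdgeV.grid i j q'' ℓ ETag.LB :: t) i q'' ℓ hct rfl hl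
        (by omega) (by simp only [List.length_cons]; omega)
      refine ⟨fun a b => if a = i ∧ b = q then bsel else χ' a b, ?_⟩
      have hχiq : (fun a b => if a = i ∧ b = q then bsel else χ' a b) i q = bsel := by
        simp
      have hq''eq : q'' = ⟨(q : ℕ) + 1, hlt⟩ := Fin.ext hq''
      have hagree : rest G (fun a b => if a = i ∧ b = q then bsel else χ' a b) j ℓ (m + 1) i q''
          = rest G χ' j ℓ (m + 1) i q'' := by
        refine rest_congr G (m + 1) i q'' (by omega) ?_
        intro a b hab
        have hne : ¬ (a = i ∧ b = q) := by
          rintro ⟨rfl, rfl⟩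
          omega
        simp [if_neg hne]
      subst hq''eq
      rw [rest_succ' G (m + 1) i q, dif_pos hlt, hagree, ← heq]
      simp [eTriple, hmid]
    | hmatch _ i'' _ _ q'' _ hi'' hqN hq''v =>
      have hltk : (i : ℕ) + 1 < k := by have := i''.2; omega
      have hstep : ((i : ℕ) + 1) * N = (i : ℕ) * N + N := Nat.succ_mul _ _
      have hstep2 : (i'' : ℕ) * N = ((i : ℕ) + 1) * N := by rw [hi'']
      obtain ⟨χ', heq⟩ := ih (DEdgeV.grid i'' j q'' ℓ ETag.LB :: t) i'' q'' ℓ hct rfl hl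
        (by omega) (by simp only [List.length_cons]; omega)
      refine ⟨fun a b => if a = i ∧ b = q then bsel else χ' a b, ?_⟩
      have hχiq : (fun a b => if a = i ∧ b = q then bsel else χ' a b) i q = bsel := by
        simp
      have hi''eq : i'' = ⟨(i : ℕ) + 1, hltk⟩ := Fin.ext hi''
      have hq''eq : q'' = ⟨0, q.pos⟩ := Fin.ext hq''v
      have hagree : rest G (fun a b => if a = i ∧ b = q then bsel else χ' a b) j ℓ (m + 1) i'' q''
          = rest G χ' j ℓ (m + 1) i'' q'' := by
        refine rest_congr G (m + 1) i'' q'' (by omega) ?_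
        intro a b hab
        have hne : ¬ (a = i ∧ b = q) := by
          rintro ⟨rfl, rfl⟩
          omega
        simp [if_neg hne]
      subst hi''eq
      subst hq''eq
      rw [rest_succ' G (m + 1) i q, dif_neg (by omega : ¬ (q : ℕ) + 1 < N), dif_pos hltk,
        hagree, ← heq]
      simp [eTriple, hmid]
end Main
section Final
variable {k N : ℕ} (G : SimpleGraph (Fin N)) [DecidableRel G.Adj] {j : Fin k}
  {χ : Fin k → Fin N → Bool} {ℓ : Fin N}

lemma claimA' (hN : 1 ≤ N) (hk : 1 ≤ k) (i0 : Fin k) (q0 : Fin N)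
    (h1 : (i0 : ℕ) = 0) (h2 : (q0 : ℕ) = 0) :
    imageH G χ j ℓ = DEdgeV.c j :: rest G χ j ℓ (k * N) i0 q0 := by
  have e1 : i0 = (⟨0, by omega⟩ : Fin k) := Fin.ext h1
  have e2 : q0 = (⟨0, by omega⟩ : Fin N) := Fin.ext h2
  rw [e1, e2, claimA G hN hk]

lemma imageH_pathlist (hN : 1 ≤ N) (hk : 1 ≤ k) :
    IsPathList (DEdgeE k N G) (DEdgeV.c j) (DEdgeV.d j) (imageH G χ j ℓ) := by
  have hkN : 1 ≤ k * N := Nat.mul_pos hk hN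
  have hA := claimA G (χ := χ) (j := j) (ℓ := ℓ) hN hk
  have hinv : ((⟨0, by omega⟩ : Fin k) : ℕ) * N + ((⟨0, by omega⟩ : Fin N) : ℕ) + k * N
      = k * N := by simp
  constructor
  · -- chain
    rw [hA]
    unfold List.Chain'
    rw [List.isChain_cons]
    constructor
    · intro y hy
      rw [rest_head G (k * N) (by omega)] at hy
      simp only [Option.mem_def, Option.some.injEq] at hy
      subst hy
      exact DEdgeE.srcC _ _ _ _ rfl rfl
    · exact rest_chain G hN (k * N) _ _ hinv
  · -- nodup
    rw [hA, List.nodup_cons]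
    refine ⟨?_, rest_nodup G (k * N) _ _ hinv⟩
    intro hmem
    rcases rest_mem G (k * N) _ _ hinv _ hmem with h | ⟨a, b, t, h, _⟩ <;> simp at h
  · rw [hA]; rfl
  · rw [hA]
    obtain ⟨y, ys, hys⟩ := List.exists_cons_of_ne_nil (rest_ne_nil G (k * N)
      (⟨0, by omega⟩ : Fin k) (⟨0, by omega⟩ : Fin N))
    rw [hys, List.getLast?_cons_cons, ← hys]
    exact rest_last G (k * N) _ _

lemma shortest_lb (hN : 1 ≤ N) (hk : 1 ≤ k) (p : List (DEdgeV k N))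
    (hp : IsPathList (DEdgeE k N G) (DEdgeV.c j) (DEdgeV.d j) p) :
    3 * k * N + 2 ≤ p.length := by
  have := mu_chain (G := G) p hp.chain _ _ hp.head hp.last
  simp only [mu] at this
  have h2 : 3 * (k * N) = 3 * k * N := by ring
  omega

end Final


/-- for every `j ∈ [k]`: (i) for each `r ∈ [N]` the path
`Canonical_edge(r; c_j⇝d_j)` is a shortest `c_j⇝d_j` path in `D_edge`, with exactly
`3kN + 2` vertices; and (ii) every shortest directed `c_j⇝d_j` path in `D_edge` is an
image in `D_edge` of the horizontal canonical path `Canonical(ℓ; c_j⇝d_j)` of `D_int`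
for some `ℓ ∈ [N]`. -/
theorem DEdge_canonH_shortest (N k : ℕ) (hN : 1 ≤ N) (hk : 1 ≤ k)
    (G : SimpleGraph (Fin N)) [DecidableRel G.Adj] (j : Fin k) :
    (∀ r : Fin N,
      IsShortestDirPath (DEdgeE k N G) (DEdgeV.c j) (DEdgeV.d j) (canonEdgeH G j r) ∧
      (canonEdgeH G j r).length = 3 * k * N + 2) ∧
    (∀ p : List (DEdgeV k N),
      IsShortestDirPath (DEdgeE k N G) (DEdgeV.c j) (DEdgeV.d j) p →
      ∃ (ℓ : Fin N) (χ : Fin k → Fin N → Bool), p = imageH G χ j ℓ) := by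
  have hkN : 1 ≤ k * N := Nat.mul_pos hk hN
  have hcanlen : ∀ r : Fin N, (canonEdgeH G j r).length = 3 * k * N + 2 := by
    intro r
    rw [canonEdgeH]
    exact imageH_length G hN hk
  have hcanpath : ∀ r : Fin N,
      IsPathList (DEdgeE k N G) (DEdgeV.c j) (DEdgeV.d j) (canonEdgeH G j r) := by
    intro r
    rw [canonEdgeH]
    exact imageH_pathlist G hN hk
  constructor
  · intro r
    refine ⟨⟨hcanpath r, ?_⟩, hcanlen r⟩
    intro q hq
    rw [hcanlen r]
    exact shortest_lb G hN hk q hq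
  · intro p hp
    have hge := shortest_lb G hN hk p hp.1
    have hle := hp.2 (canonEdgeH G j ⟨0, by omega⟩) (hcanpath _)
    rw [hcanlen] at hle
    have hplen : p.length = 3 * k * N + 2 := le_antisymm hle hge
    rcases p with _ | ⟨x, p1⟩
    · have := hp.1.head; simp at this
    have hx : x = DEdgeV.c j := by have := hp.1.head; simpa using this
    subst hx
    rcases p1 with _ | ⟨y, t⟩
    · have := hp.1.last; simp at this
    have hc := hp.1.chain
    unfold List.Chain' at hc
    rw [List.isChain_cons_cons] at hc
    obtain ⟨ecy, hct⟩ := hc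
    cases ecy with
    | srcC i _ q ℓ hi0 hq0 =>
      have hl : (DEdgeV.grid i j q ℓ ETag.LB :: t).getLast? = some (DEdgeV.d j) := by
        have := hp.1.last
        rwa [List.getLast?_cons_cons] at this
      have hizero : (i : ℕ) * N = 0 := by rw [hi0]; ring
      have h3 : 3 * k * N = 3 * (k * N) := by ring
      obtain ⟨χ, heq⟩ := main_lemma G hN (k * N - 1)
        (DEdgeV.grid i j q ℓ ETag.LB :: t) i q ℓ hct rfl hl (by omega)
        (by simp only [List.length_cons] at hplen ⊢; omega)
      rw [show k * N - 1 + 1 = k * N from by omega] at heq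
      refine ⟨ℓ, χ, ?_⟩
      rw [claimA' G hN hk i q hi0 hq0, ← heq]
end

section
/- If G contains a clique {v_{γ_1},…,v_{γ_k}} of size k (k distinct, pairwise adjacent vertices), then the 2k directed paths Canonical_edge(γ_i; a_i⇝b_i) for i ∈ [k] and Canonical_edge(γ_j; c_j⇝d_j) for j ∈ [k] are pairwise edge-disjoint and each is a shortest path in D_edge between its terminal pair; in particular all 2k terminal pairs of (D_edge, T) can be simultaneously satisfied by pairwise edge-disjoint shortest paths. -/
namespace DEA
variable {V α : Type*}

theorem flatMap_ne_nil {g : α → List V} (hne : ∀ a, g a ≠ []) :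
    ∀ {l : List α}, l ≠ [] → l.flatMap g ≠ []
  | [], h => absurd rfl h
  | a :: l, _ => by
    simp only [List.flatMap_cons]
    intro h
    rcases List.append_eq_nil_iff.1 h with ⟨h1, _⟩
    exact hne a h1

theorem head?_flatMap {g : α → List V} (hne : ∀ a, g a ≠ []) :
    ∀ {l : List α} (hl : l ≠ []), (l.flatMap g).head? = (g (l.head hl)).head?
  | [], h => absurd rfl h
  | a :: l, _ => by
    simp only [List.flatMap_cons, List.head_cons]
    exact List.head?_append_of_ne_nil _ (hne a)

theorem getLast?_flatMap {g : α → List V} (hne : ∀ a, g a ≠ []) :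
    ∀ {l : List α} (hl : l ≠ []), (l.flatMap g).getLast? = (g (l.getLast hl)).getLast?
  | [], h => absurd rfl h
  | [a], _ => by simp
  | a :: b :: l, _ => by
    rw [List.flatMap_cons, List.getLast?_append_of_ne_nil _ (flatMap_ne_nil hne (by simp)),
      getLast?_flatMap hne (l := b :: l) (by simp)]
    simp [List.getLast_cons]

theorem chain'_flatMap {R : V → V → Prop} {g : α → List V} (hne : ∀ a, g a ≠ []) :
    ∀ {l : List α}, (∀ a ∈ l, (g a).Chain' R) →
    l.Chain' (fun a b => ∀ x y, (g a).getLast? = some x → (g b).head? = some y → R x y) →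
    (l.flatMap g).Chain' R
  | [], _, _ => List.isChain_nil
  | [a], hc, _ => by simpa using hc a (by simp)
  | a :: b :: l, hc, hl => by
    rw [List.flatMap_cons]
    refine (hc a (by simp)).append (chain'_flatMap hne (fun x hx => hc x (by simp [hx]))
      (List.isChain_cons_cons.1 hl).2) ?_
    intro x hx y hy
    rw [head?_flatMap hne (by simp)] at hy
    exact (List.isChain_cons_cons.1 hl).1 x y hx hy

theorem mem_dirEdges_cons {x : V} {l : List V} {e : V × V} (h : e ∈ dirEdges (x :: l)) :
    (e.1 = x ∧ l.head? = some e.2) ∨ e ∈ dirEdges l := by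
  cases l with
  | nil => simp [dirEdges] at h
  | cons y l =>
    simp only [dirEdges, List.tail_cons, List.zip_cons_cons, List.mem_cons] at h
    rcases h with rfl | h
    · exact Or.inl ⟨rfl, rfl⟩
    · exact Or.inr h

theorem mem_dirEdges_append {l₂ : List V} {e : V × V} :
    ∀ {l₁ : List V}, e ∈ dirEdges (l₁ ++ l₂) →
      e ∈ dirEdges l₁ ∨ (l₁.getLast? = some e.1 ∧ l₂.head? = some e.2) ∨ e ∈ dirEdges l₂
  | [], h => Or.inr (Or.inr h)
  | [x], h => by
    rcases mem_dirEdges_cons (by simpa using h) with ⟨h1, h2⟩ | h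
    · exact Or.inr (Or.inl ⟨by simp [h1], h2⟩)
    · exact Or.inr (Or.inr h)
  | x :: y :: l₁, h => by
    rcases mem_dirEdges_cons (by simpa using h) with ⟨h1, h2⟩ | h
    · refine Or.inl ?_
      simp only [dirEdges, List.tail_cons, List.zip_cons_cons, List.mem_cons]
      left
      rw [show y :: (l₁ ++ l₂) = (y :: l₁) ++ l₂ by simp,
        List.head?_append_of_ne_nil _ (by simp)] at h2
      simp at h2
      ext
      · simp [h1]
      · simp [h2.symm]
    · rcases mem_dirEdges_append (l₁ := y :: l₁) h with h | h | h
      · refine Or.inl ?_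
        simp only [dirEdges, List.tail_cons, List.zip_cons_cons, List.mem_cons]
        exact Or.inr h
      · exact Or.inr (Or.inl ⟨by rw [List.getLast?_cons_cons]; exact h.1, h.2⟩)
      · exact Or.inr (Or.inr h)

theorem mem_dirEdges_flatMap {g : α → List V} (hne : ∀ a, g a ≠ []) {e : V × V} :
    ∀ {l : List α}, e ∈ dirEdges (l.flatMap g) →
      (∃ a ∈ l, e ∈ dirEdges (g a)) ∨
      (∃ p ∈ l.zip l.tail, (g p.1).getLast? = some e.1 ∧ (g p.2).head? = some e.2)
  | [], h => by simp [dirEdges] at h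
  | a :: l, h => by
    rw [List.flatMap_cons] at h
    rcases mem_dirEdges_append h with h | ⟨h1, h2⟩ | h
    · exact Or.inl ⟨a, by simp, h⟩
    · cases l with
      | nil => simp at h2
      | cons b l =>
        rw [head?_flatMap hne (by simp)] at h2
        exact Or.inr ⟨(a, b), by simp, h1, h2⟩
    · rcases mem_dirEdges_flatMap hne (l := l) h with ⟨a', ha', he⟩ | ⟨p, hp, hpe⟩
      · exact Or.inl ⟨a', by simp [ha'], he⟩
      · refine Or.inr ⟨p, ?_, hpe⟩
        cases l with
        | nil => simp at hp
        | cons b l => simp only [List.tail_cons, List.zip_cons_cons, List.mem_cons]; right; exact hp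

theorem rel_of_mem_zip_tail {R : α → α → Prop} :
    ∀ {l : List α}, l.Chain' R → ∀ p ∈ l.zip l.tail, R p.1 p.2
  | [], _, p, hp => by simp at hp
  | [a], _, p, hp => by simp at hp
  | a :: b :: l, h, p, hp => by
    simp only [List.tail_cons, List.zip_cons_cons, List.mem_cons] at hp
    rcases hp with rfl | hp
    · exact (List.isChain_cons_cons.1 h).1
    · exact rel_of_mem_zip_tail (List.isChain_cons_cons.1 h).2 p hp

theorem length_lb {φ : V → ℕ} {R : V → V → Prop} (hφ : ∀ x y, R x y → φ y ≤ φ x + 1) :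
    ∀ {p : List V}, p.Chain' R → ∀ {s t}, p.head? = some s → p.getLast? = some t →
      φ t + 1 ≤ φ s + p.length
  | [], _, s, t, hs, _ => by simp at hs
  | [x], _, s, t, hs, ht => by
    simp at hs ht; subst hs; subst ht; simp
  | x :: y :: p, hc, s, t, hs, ht => by
    simp only [List.head?_cons, Option.some.injEq] at hs
    subst hs
    have := length_lb hφ (List.isChain_cons_cons.1 hc).2 (s := y) (t := t) rfl
      (by rw [← ht, List.getLast?_cons_cons])
    have h2 := hφ _ _ (List.isChain_cons_cons.1 hc).1
    simp only [List.length_cons] at *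
    omega

theorem chain'_finRange (n : ℕ) :
    (List.finRange n).Chain' (fun a b : Fin n => (b : ℕ) = (a : ℕ) + 1) := by
  refine List.isChain_iff_getElem.2 ?_
  intro i h
  simp

theorem head?_finRange (n : ℕ) (h : 0 < n) :
    (List.finRange n).head? = some ⟨0, h⟩ := by
  rw [List.head?_eq_getElem?, List.getElem?_eq_getElem (by simpa using h)]
  simp

theorem getLast?_finRange (n : ℕ) (h : 0 < n) :
    (List.finRange n).getLast? = some ⟨n - 1, by omega⟩ := by
  rw [List.getLast?_eq_getElem?, List.length_finRange,
    List.getElem?_eq_getElem (by simp; omega)]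
  simp

end DEA

namespace DEA

theorem head_finRange (n : ℕ) (h : 0 < n) (hne : List.finRange n ≠ []) :
    (List.finRange n).head hne = ⟨0, h⟩ := by
  have h1 := head?_finRange n h
  rw [List.head?_eq_head hne] at h1
  exact Option.some_injective _ h1

theorem getLast_finRange (n : ℕ) (h : 0 < n) (hne : List.finRange n ≠ []) :
    (List.finRange n).getLast hne = ⟨n - 1, by omega⟩ := by
  have h1 := getLast?_finRange n h
  rw [List.getLast?_eq_getLast hne] at h1
  exact Option.some_injective _ h1

end DEA
namespace DEC
open DEA

variable {k N : ℕ} (G : SimpleGraph (Fin N)) [DecidableRel G.Adj]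

def tagval : ETag → ℕ
  | .LB => 1
  | .TR => 3
  | _ => 2

def phiV : DEdgeV k N → ℕ
  | .grid _ j _ ℓ t => 3 * ((j : ℕ) * N + (ℓ : ℕ)) + tagval t
  | .a _ => 0
  | .b _ => 3 * k * N + 1
  | .c _ => 3 * k * N + 1
  | .d _ => 0

def phiH : DEdgeV k N → ℕ
  | .grid i _ q _ t => 3 * ((i : ℕ) * N + (q : ℕ)) + tagval t
  | .a _ => 3 * k * N + 1
  | .b _ => 0
  | .c _ => 0
  | .d _ => 3 * k * N + 1

theorem phiV_mono {x y : DEdgeV k N} (h : DEdgeE k N G x y) : phiV y ≤ phiV x + 1 := by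
  cases h with
  | mid1 i j q ℓ h => simp only [phiV, tagval]; linarith
  | mid2 i j q ℓ h => simp only [phiV, tagval]; linarith
  | hor1 i j q ℓ h => simp only [phiV, tagval]; linarith
  | hor2 i j q ℓ h => simp only [phiV, tagval]; linarith
  | ver1 i j q ℓ h => simp only [phiV, tagval]; linarith
  | ver2 i j q ℓ h => simp only [phiV, tagval]; linarith
  | up i j q ℓ ℓ' h => simp only [phiV, tagval]; linarith
  | right i j q q' ℓ h => simp only [phiV, tagval]; linarith
  | hmatch i i' j q q' ℓ hi hq hq' => simp only [phiV, tagval]; linarith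
  | vmatch i j j' q ℓ ℓ' hj hl hl' =>
      simp only [phiV, tagval]
      have h1 : (j' : ℕ) * N = (j : ℕ) * N + N := by rw [hj]; ring
      linarith
  | srcA i j q ℓ hj hl =>
      simp only [phiV, tagval]
      have h1 : (j : ℕ) * N = 0 := by rw [hj]; ring
      linarith
  | snkB i j q ℓ hj hl =>
      simp only [phiV, tagval]
      have h1 : ((j : ℕ) + 1) * N = k * N := by rw [hj]
      have h1' : ((j : ℕ) + 1) * N = (j : ℕ) * N + N := by ring
      have h2 : 3 * k * N = 3 * (k * N) := by ring
      linarith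
  | srcC i j q ℓ hi hq =>
      simp only [phiV, tagval]
      have h1 : ((j : ℕ) + 1) * N ≤ k * N := Nat.mul_le_mul_right N j.isLt
      have h2 : ((j : ℕ) + 1) * N = (j : ℕ) * N + N := by ring
      have h3 : 3 * k * N = 3 * (k * N) := by ring
      have h4 : (ℓ : ℕ) < N := ℓ.isLt
      linarith
  | snkD i j q ℓ hi hq =>
      simp only [phiV, tagval]; exact Nat.zero_le _

theorem phiH_mono {x y : DEdgeV k N} (h : DEdgeE k N G x y) : phiH y ≤ phiH x + 1 := by
  cases h with
  | mid1 i j q ℓ h => simp only [phiH, tagval]; linarith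
  | mid2 i j q ℓ h => simp only [phiH, tagval]; linarith
  | hor1 i j q ℓ h => simp only [phiH, tagval]; linarith
  | hor2 i j q ℓ h => simp only [phiH, tagval]; linarith
  | ver1 i j q ℓ h => simp only [phiH, tagval]; linarith
  | ver2 i j q ℓ h => simp only [phiH, tagval]; linarith
  | up i j q ℓ ℓ' h => simp only [phiH, tagval]; linarith
  | right i j q q' ℓ h => simp only [phiH, tagval]; linarith
  | hmatch i i' j q q' ℓ hi hq hq' =>
      simp only [phiH, tagval]
      have h1 : (i' : ℕ) * N = (i : ℕ) * N + N := by rw [hi]; ring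
      linarith
  | vmatch i j j' q ℓ ℓ' hj hl hl' => simp only [phiH, tagval]; linarith
  | srcA i j q ℓ hj hl =>
      simp only [phiH, tagval]
      have h1 : ((i : ℕ) + 1) * N ≤ k * N := Nat.mul_le_mul_right N i.isLt
      have h2 : ((i : ℕ) + 1) * N = (i : ℕ) * N + N := by ring
      have h3 : 3 * k * N = 3 * (k * N) := by ring
      have h4 : (q : ℕ) < N := q.isLt
      linarith
  | snkB i j q ℓ hj hl => simp only [phiH, tagval]; exact Nat.zero_le _
  | srcC i j q ℓ hi hq =>
      simp only [phiH, tagval]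
      have h1 : (i : ℕ) * N = 0 := by rw [hi]; ring
      linarith
  | snkD i j q ℓ hi hq =>
      simp only [phiH, tagval]
      have h1 : ((i : ℕ) + 1) * N = k * N := by rw [hi]
      have h1' : ((i : ℕ) + 1) * N = (i : ℕ) * N + N := by ring
      have h2 : 3 * k * N = 3 * (k * N) := by ring
      linarith

end DEC
namespace DEC

variable {k N : ℕ} (G : SimpleGraph (Fin N)) [DecidableRel G.Adj]

def mtag (b : Bool) (i j : Fin k) (q ℓ : Fin N) : ETag :=
  if Split G i j q ℓ then (if b then ETag.Hor else ETag.Ver) else ETag.Mid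

theorem eTriple_eq (b : Bool) (i j : Fin k) (q ℓ : Fin N) :
    eTriple G i j q ℓ b =
      [.grid i j q ℓ .LB, .grid i j q ℓ (mtag G b i j q ℓ), .grid i j q ℓ .TR] := rfl

theorem mtag_ne_LB (b : Bool) (i j : Fin k) (q ℓ : Fin N) :
    mtag G b i j q ℓ ≠ ETag.LB := by
  by_cases h : Split G i j q ℓ <;> cases b <;> simp [mtag, h]

theorem mtag_ne_TR (b : Bool) (i j : Fin k) (q ℓ : Fin N) :
    mtag G b i j q ℓ ≠ ETag.TR := by
  by_cases h : Split G i j q ℓ <;> cases b <;> simp [mtag, h]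

theorem tagval_mtag (b : Bool) (i j : Fin k) (q ℓ : Fin N) :
    tagval (mtag G b i j q ℓ) = 2 := by
  by_cases h : Split G i j q ℓ <;> cases b <;> simp [mtag, h, tagval]

theorem edge_LB_mid (b : Bool) (i j : Fin k) (q ℓ : Fin N) :
    DEdgeE k N G (.grid i j q ℓ .LB) (.grid i j q ℓ (mtag G b i j q ℓ)) := by
  by_cases h : Split G i j q ℓ
  · cases b
    · simpa [mtag, h] using DEdgeE.ver1 i j q ℓ h
    · simpa [mtag, h] using DEdgeE.hor1 i j q ℓ h
  · simpa [mtag, h] using DEdgeE.mid1 i j q ℓ h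

theorem edge_mid_TR (b : Bool) (i j : Fin k) (q ℓ : Fin N) :
    DEdgeE k N G (.grid i j q ℓ (mtag G b i j q ℓ)) (.grid i j q ℓ .TR) := by
  by_cases h : Split G i j q ℓ
  · cases b
    · simpa [mtag, h] using DEdgeE.ver2 i j q ℓ h
    · simpa [mtag, h] using DEdgeE.hor2 i j q ℓ h
  · simpa [mtag, h] using DEdgeE.mid2 i j q ℓ h

theorem eTriple_ne_nil (b : Bool) (i j : Fin k) (q ℓ : Fin N) :
    eTriple G i j q ℓ b ≠ [] := by simp [eTriple_eq]

section V
variable (hN : 0 < N) (hk : 0 < k) (χ : Fin k → Fin N → Bool) (i : Fin k) (r : Fin N)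

include hN in
theorem innerV_ne_nil (j : Fin k) :
    ((List.finRange N).flatMap fun ℓ => eTriple G i j r ℓ (χ j ℓ)) ≠ [] :=
  DEA.flatMap_ne_nil (fun ℓ => eTriple_ne_nil G _ _ _ _ _)
    (by simp [List.finRange_eq_nil_iff]; omega)

include hN in
theorem innerV_head (j : Fin k) :
    ((List.finRange N).flatMap fun ℓ => eTriple G i j r ℓ (χ j ℓ)).head?
      = some (.grid i j r ⟨0, hN⟩ .LB) := by
  rw [DEA.head?_flatMap (fun ℓ => eTriple_ne_nil G _ _ _ _ _)
      (by simp [List.finRange_eq_nil_iff]; omega),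
    DEA.head_finRange N hN _]
  simp [eTriple_eq]

include hN in
theorem innerV_last (j : Fin k) :
    ((List.finRange N).flatMap fun ℓ => eTriple G i j r ℓ (χ j ℓ)).getLast?
      = some (.grid i j r ⟨N - 1, by omega⟩ .TR) := by
  rw [DEA.getLast?_flatMap (fun ℓ => eTriple_ne_nil G _ _ _ _ _)
      (by simp [List.finRange_eq_nil_iff]; omega),
    DEA.getLast_finRange N hN _]
  simp [eTriple_eq]

include hN in
theorem innerV_chain (j : Fin k) :
    ((List.finRange N).flatMap fun ℓ => eTriple G i j r ℓ (χ j ℓ)).Chain'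
      (fun x y => DEdgeE k N G x y ∧ phiV x < phiV y) := by
  refine DEA.chain'_flatMap (fun ℓ => eTriple_ne_nil G _ _ _ _ _) ?_ ?_
  · intro ℓ _
    rw [eTriple_eq]
    refine List.isChain_cons_cons.2 ⟨⟨edge_LB_mid G _ _ _ _ _, ?_⟩,
      List.isChain_pair.2 ⟨edge_mid_TR G _ _ _ _ _, ?_⟩⟩
    · simp only [phiV, tagval_mtag]; simp only [tagval]; linarith
    · simp only [phiV, tagval_mtag]; simp only [tagval]; linarith
  · refine (DEA.chain'_finRange N).imp ?_
    intro ℓ ℓ' hsucc x y hx hy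
    rw [eTriple_eq] at hx hy
    simp only [List.getLast?_cons_cons, List.getLast?_singleton, Option.some.injEq] at hx
    simp only [List.head?_cons, Option.some.injEq] at hy
    subst hx; subst hy
    refine ⟨DEdgeE.up i j r ℓ ℓ' hsucc, ?_⟩
    simp only [phiV, tagval]
    linarith

include hN hk in
theorem chain'_imageV :
    (imageV G χ i r).Chain' (fun x y => DEdgeE k N G x y ∧ phiV x < phiV y) := by
  have hfk : List.finRange k ≠ [] := by simp [List.finRange_eq_nil_iff]; omega
  rw [imageV]
  refine List.isChain_cons.2 ⟨?_, ?_⟩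
  · intro y hy
    rw [List.head?_append_of_ne_nil _
        (DEA.flatMap_ne_nil (fun j => innerV_ne_nil G hN χ i r j) hfk),
      DEA.head?_flatMap (fun j => innerV_ne_nil G hN χ i r j) hfk,
      DEA.head_finRange k hk _, innerV_head G hN χ i r] at hy
    simp only [Option.mem_def, Option.some.injEq] at hy
    subst hy
    refine ⟨DEdgeE.srcA i ⟨0, hk⟩ r ⟨0, hN⟩ rfl rfl, ?_⟩
    simp [phiV, tagval]
  · refine List.IsChain.append ?_ (List.isChain_singleton _) ?_
    · refine DEA.chain'_flatMap (fun j => innerV_ne_nil G hN χ i r j)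
        (fun j _ => innerV_chain G hN χ i r j) ?_
      refine (DEA.chain'_finRange k).imp ?_
      intro j j' hsucc x y hx hy
      rw [innerV_last G hN χ i r j] at hx
      rw [innerV_head G hN χ i r j'] at hy
      simp only [Option.mem_def, Option.some.injEq] at hx hy
      subst hx; subst hy
      refine ⟨DEdgeE.vmatch i j j' r ⟨N - 1, by omega⟩ ⟨0, hN⟩ hsucc
        (show N - 1 + 1 = N by omega) rfl, ?_⟩
      simp only [phiV, tagval]
      have h1 : (j' : ℕ) * N = (j : ℕ) * N + N := by rw [hsucc]; ring
      have h2 : N - 1 + 1 = N := by omega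
      linarith
    · intro x hx y hy
      rw [DEA.getLast?_flatMap (fun j => innerV_ne_nil G hN χ i r j) hfk,
        DEA.getLast_finRange k hk _, innerV_last G hN χ i r] at hx
      simp only [Option.mem_def, Option.some.injEq] at hx
      simp only [List.head?_cons, Option.mem_def, Option.some.injEq] at hy
      subst hx; subst hy
      refine ⟨DEdgeE.snkB i ⟨k - 1, by omega⟩ r ⟨N - 1, by omega⟩
        (show k - 1 + 1 = k by omega) (show N - 1 + 1 = N by omega), ?_⟩
      simp only [phiV, tagval, Fin.val_mk]
      have h1 : (k - 1) * N + N = k * N := by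
        have : k - 1 + 1 = k := by omega
        calc (k - 1) * N + N = (k - 1 + 1) * N := by ring
        _ = k * N := by rw [this]
      have h2 : N - 1 + 1 = N := by omega
      have h3 : 3 * k * N = 3 * (k * N) := by ring
      linarith

end V
end DEC
namespace DEC

variable {k N : ℕ} (G : SimpleGraph (Fin N)) [DecidableRel G.Adj]

section H
variable (hN : 0 < N) (hk : 0 < k) (χ : Fin k → Fin N → Bool) (j : Fin k) (r : Fin N)

include hN in
theorem innerH_ne_nil (i : Fin k) :
    ((List.finRange N).flatMap fun q => eTriple G i j q r (χ i q)) ≠ [] :=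
  DEA.flatMap_ne_nil (fun q => eTriple_ne_nil G _ _ _ _ _)
    (by simp [List.finRange_eq_nil_iff]; omega)

include hN in
theorem innerH_head (i : Fin k) :
    ((List.finRange N).flatMap fun q => eTriple G i j q r (χ i q)).head?
      = some (.grid i j ⟨0, hN⟩ r .LB) := by
  rw [DEA.head?_flatMap (fun q => eTriple_ne_nil G _ _ _ _ _)
      (by simp [List.finRange_eq_nil_iff]; omega),
    DEA.head_finRange N hN _]
  simp [eTriple_eq]

include hN in
theorem innerH_last (i : Fin k) :
    ((List.finRange N).flatMap fun q => eTriple G i j q r (χ i q)).getLast?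
      = some (.grid i j ⟨N - 1, by omega⟩ r .TR) := by
  rw [DEA.getLast?_flatMap (fun q => eTriple_ne_nil G _ _ _ _ _)
      (by simp [List.finRange_eq_nil_iff]; omega),
    DEA.getLast_finRange N hN _]
  simp [eTriple_eq]

include hN in
theorem innerH_chain (i : Fin k) :
    ((List.finRange N).flatMap fun q => eTriple G i j q r (χ i q)).Chain'
      (fun x y => DEdgeE k N G x y ∧ phiH x < phiH y) := by
  refine DEA.chain'_flatMap (fun q => eTriple_ne_nil G _ _ _ _ _) ?_ ?_
  · intro q _
    rw [eTriple_eq]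
    refine List.isChain_cons_cons.2 ⟨⟨edge_LB_mid G _ _ _ _ _, ?_⟩,
      List.isChain_pair.2 ⟨edge_mid_TR G _ _ _ _ _, ?_⟩⟩
    · simp only [phiH, tagval_mtag]; simp only [tagval]; linarith
    · simp only [phiH, tagval_mtag]; simp only [tagval]; linarith
  · refine (DEA.chain'_finRange N).imp ?_
    intro q q' hsucc x y hx hy
    rw [eTriple_eq] at hx hy
    simp only [List.getLast?_cons_cons, List.getLast?_singleton, Option.some.injEq] at hx
    simp only [List.head?_cons, Option.some.injEq] at hy
    subst hx; subst hy
    refine ⟨DEdgeE.right i j q q' r hsucc, ?_⟩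
    simp only [phiH, tagval]
    linarith

include hN hk in
theorem chain'_imageH :
    (imageH G χ j r).Chain' (fun x y => DEdgeE k N G x y ∧ phiH x < phiH y) := by
  have hfk : List.finRange k ≠ [] := by simp [List.finRange_eq_nil_iff]; omega
  rw [imageH]
  refine List.isChain_cons.2 ⟨?_, ?_⟩
  · intro y hy
    rw [List.head?_append_of_ne_nil _
        (DEA.flatMap_ne_nil (fun i => innerH_ne_nil G hN χ j r i) hfk),
      DEA.head?_flatMap (fun i => innerH_ne_nil G hN χ j r i) hfk,
      DEA.head_finRange k hk _, innerH_head G hN χ j r] at hy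
    simp only [Option.mem_def, Option.some.injEq] at hy
    subst hy
    refine ⟨DEdgeE.srcC ⟨0, hk⟩ j ⟨0, hN⟩ r rfl rfl, ?_⟩
    simp [phiH, tagval]
  · refine List.IsChain.append ?_ (List.isChain_singleton _) ?_
    · refine DEA.chain'_flatMap (fun i => innerH_ne_nil G hN χ j r i)
        (fun i _ => innerH_chain G hN χ j r i) ?_
      refine (DEA.chain'_finRange k).imp ?_
      intro i i' hsucc x y hx hy
      rw [innerH_last G hN χ j r i] at hx
      rw [innerH_head G hN χ j r i'] at hy
      simp only [Option.mem_def, Option.some.injEq] at hx hy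
      subst hx; subst hy
      refine ⟨DEdgeE.hmatch i i' j ⟨N - 1, by omega⟩ ⟨0, hN⟩ r hsucc
        (show N - 1 + 1 = N by omega) rfl, ?_⟩
      simp only [phiH, tagval]
      have h1 : (i' : ℕ) * N = (i : ℕ) * N + N := by rw [hsucc]; ring
      have h2 : N - 1 + 1 = N := by omega
      linarith
    · intro x hx y hy
      rw [DEA.getLast?_flatMap (fun i => innerH_ne_nil G hN χ j r i) hfk,
        DEA.getLast_finRange k hk _, innerH_last G hN χ j r] at hx
      simp only [Option.mem_def, Option.some.injEq] at hx
      simp only [List.head?_cons, Option.mem_def, Option.some.injEq] at hy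
      subst hx; subst hy
      refine ⟨DEdgeE.snkD ⟨k - 1, by omega⟩ j ⟨N - 1, by omega⟩ r
        (show k - 1 + 1 = k by omega) (show N - 1 + 1 = N by omega), ?_⟩
      simp only [phiH, tagval]
      have h1 : (k - 1) * N + N = k * N := by
        have hne : k - 1 + 1 = k := by omega
        calc (k - 1) * N + N = (k - 1 + 1) * N := by ring
        _ = k * N := by rw [hne]
      have h2 : N - 1 + 1 = N := by omega
      have h3 : 3 * k * N = 3 * (k * N) := by ring
      linarith

end H
end DEC
namespace DEC

variable {k N : ℕ} (G : SimpleGraph (Fin N)) [DecidableRel G.Adj]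

theorem length_imageV (χ : Fin k → Fin N → Bool) (i : Fin k) (r : Fin N) :
    (imageV G χ i r).length = 3 * k * N + 2 := by
  simp [imageV, eTriple_eq, Function.comp_def]
  ring

theorem length_imageH (χ : Fin k → Fin N → Bool) (j : Fin k) (r : Fin N) :
    (imageH G χ j r).length = 3 * k * N + 2 := by
  simp [imageH, eTriple_eq, Function.comp_def]
  ring

theorem nodup_of_chain_lt {φ : DEdgeV k N → ℕ} {p : List (DEdgeV k N)}
    (h : p.Chain' (fun x y => φ x < φ y)) : p.Nodup := by
  haveI : IsTrans (DEdgeV k N) (fun x y => φ x < φ y) :=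
    ⟨fun _ _ _ h1 h2 => lt_trans h1 h2⟩
  haveI : Trans (fun x y : DEdgeV k N => φ x < φ y) (fun x y => φ x < φ y)
      (fun x y => φ x < φ y) := ⟨fun h1 h2 => lt_trans h1 h2⟩
  have hpw := List.isChain_iff_pairwise.mp h
  exact hpw.imp (fun {a b} hlt heq => by rw [heq] at hlt; exact lt_irrefl _ hlt)

theorem shortestV (hN : 0 < N) (hk : 0 < k) (χ : Fin k → Fin N → Bool) (i : Fin k) (r : Fin N) :
    IsShortestDirPath (DEdgeE k N G) (.a i) (.b i) (imageV G χ i r) := by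
  have hc := chain'_imageV G hN hk χ i r
  refine ⟨⟨hc.imp (fun a b h => h.1), nodup_of_chain_lt (hc.imp (fun a b h => h.2)), rfl, ?_⟩, ?_⟩
  · rw [imageV, ← List.cons_append, List.getLast?_concat]
  · intro q hq
    have hlb := DEA.length_lb (fun x y h => phiV_mono G h) hq.chain hq.head hq.last
    simp only [phiV] at hlb
    rw [length_imageV]
    linarith

theorem shortestH (hN : 0 < N) (hk : 0 < k) (χ : Fin k → Fin N → Bool) (j : Fin k) (r : Fin N) :
    IsShortestDirPath (DEdgeE k N G) (.c j) (.d j) (imageH G χ j r) := by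
  have hc := chain'_imageH G hN hk χ j r
  refine ⟨⟨hc.imp (fun a b h => h.1), nodup_of_chain_lt (hc.imp (fun a b h => h.2)), rfl, ?_⟩, ?_⟩
  · rw [imageH, ← List.cons_append, List.getLast?_concat]
  · intro q hq
    have hlb := DEA.length_lb (fun x y h => phiH_mono G h) hq.chain hq.head hq.last
    simp only [phiH] at hlb
    rw [length_imageH]
    linarith

end DEC
namespace DEC

variable {k N : ℕ} (G : SimpleGraph (Fin N)) [DecidableRel G.Adj]

theorem mem_dirEdges_imageV (hN : 0 < N) (hk : 0 < k) {χ : Fin k → Fin N → Bool}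
    {i : Fin k} {r : Fin N} {e : DEdgeV k N × DEdgeV k N}
    (he : e ∈ dirEdges (imageV G χ i r)) :
    (∃ (j : Fin k) (ℓ : Fin N), e = (.a i, .grid i j r ℓ .LB)) ∨
    (∃ (j : Fin k) (ℓ : Fin N),
      e = (.grid i j r ℓ .LB, .grid i j r ℓ (mtag G (χ j ℓ) i j r ℓ))) ∨
    (∃ (j : Fin k) (ℓ : Fin N),
      e = (.grid i j r ℓ (mtag G (χ j ℓ) i j r ℓ), .grid i j r ℓ .TR)) ∨
    (∃ (j j₂ : Fin k) (ℓ ℓ₂ : Fin N), ¬((j : ℕ) = (j₂ : ℕ) ∧ (ℓ : ℕ) = (ℓ₂ : ℕ)) ∧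
      e = (.grid i j r ℓ .TR, .grid i j₂ r ℓ₂ .LB)) ∨
    (∃ (j : Fin k) (ℓ : Fin N), e = (.grid i j r ℓ .TR, .b i)) := by
  rw [imageV] at he
  have hfk : List.finRange k ≠ [] := by simp [List.finRange_eq_nil_iff]; omega
  have hgne : ∀ j : Fin k,
      ((List.finRange N).flatMap fun ℓ => eTriple G i j r ℓ (χ j ℓ)) ≠ [] :=
    fun j => innerV_ne_nil G hN χ i r j
  have hFMne := DEA.flatMap_ne_nil hgne hfk
  rcases DEA.mem_dirEdges_cons he with ⟨h1, h2⟩ | he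
  · rw [List.head?_append_of_ne_nil _ hFMne, DEA.head?_flatMap hgne hfk,
      DEA.head_finRange k hk _, innerV_head G hN χ i r] at h2
    rw [Option.some_inj] at h2
    left
    exact ⟨⟨0, hk⟩, ⟨0, hN⟩, Prod.ext h1 h2.symm⟩
  · rcases DEA.mem_dirEdges_append he with he | ⟨h1, h2⟩ | he
    · rcases DEA.mem_dirEdges_flatMap hgne he with
        ⟨j, _, hej⟩ | ⟨⟨j, j'⟩, hpp, h1, h2⟩
      · rcases DEA.mem_dirEdges_flatMap (fun ℓ => eTriple_ne_nil G _ _ _ _ _) hej with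
          ⟨ℓ, _, het⟩ | ⟨⟨ℓ, ℓ'⟩, hpp, h1, h2⟩
        · rw [eTriple_eq] at het
          simp only [dirEdges, List.tail_cons, List.zip_cons_cons, List.zip_nil_right,
            List.mem_cons, List.not_mem_nil, or_false] at het
          rcases het with h | h
          · exact Or.inr (Or.inl ⟨j, ℓ, h⟩)
          · exact Or.inr (Or.inr (Or.inl ⟨j, ℓ, h⟩))
        · have hsucc := DEA.rel_of_mem_zip_tail (DEA.chain'_finRange N) _ hpp
          rw [eTriple_eq] at h1 h2
          simp only [List.getLast?_cons_cons, List.getLast?_singleton,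
            List.head?_cons, Option.some.injEq] at h1 h2
          refine Or.inr (Or.inr (Or.inr (Or.inl ⟨j, j, ℓ, ℓ', ?_, Prod.ext h1.symm h2.symm⟩)))
          simp only at hsucc
          omega
      · have hsucc := DEA.rel_of_mem_zip_tail (DEA.chain'_finRange k) _ hpp
        rw [innerV_last G hN χ i r j, Option.some_inj] at h1
        rw [innerV_head G hN χ i r j', Option.some_inj] at h2
        refine Or.inr (Or.inr (Or.inr (Or.inl
          ⟨j, j', ⟨N - 1, by omega⟩, ⟨0, hN⟩, ?_, Prod.ext h1.symm h2.symm⟩)))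
        simp only at hsucc
        omega
    · rw [DEA.getLast?_flatMap hgne hfk, DEA.getLast_finRange k hk _,
        innerV_last G hN χ i r, Option.some_inj] at h1
      simp only [List.head?_cons, Option.some.injEq] at h2
      exact Or.inr (Or.inr (Or.inr (Or.inr
        ⟨⟨k - 1, by omega⟩, ⟨N - 1, by omega⟩, Prod.ext h1.symm h2.symm⟩)))
    · simp [dirEdges] at he

theorem mem_dirEdges_imageH (hN : 0 < N) (hk : 0 < k) {χ : Fin k → Fin N → Bool}
    {j : Fin k} {r : Fin N} {e : DEdgeV k N × DEdgeV k N}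
    (he : e ∈ dirEdges (imageH G χ j r)) :
    (∃ (i : Fin k) (q : Fin N), e = (.c j, .grid i j q r .LB)) ∨
    (∃ (i : Fin k) (q : Fin N),
      e = (.grid i j q r .LB, .grid i j q r (mtag G (χ i q) i j q r))) ∨
    (∃ (i : Fin k) (q : Fin N),
      e = (.grid i j q r (mtag G (χ i q) i j q r), .grid i j q r .TR)) ∨
    (∃ (i i₂ : Fin k) (q q₂ : Fin N), ¬((i : ℕ) = (i₂ : ℕ) ∧ (q : ℕ) = (q₂ : ℕ)) ∧
      e = (.grid i j q r .TR, .grid i₂ j q₂ r .LB)) ∨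
    (∃ (i : Fin k) (q : Fin N), e = (.grid i j q r .TR, .d j)) := by
  rw [imageH] at he
  have hfk : List.finRange k ≠ [] := by simp [List.finRange_eq_nil_iff]; omega
  have hgne : ∀ i : Fin k,
      ((List.finRange N).flatMap fun q => eTriple G i j q r (χ i q)) ≠ [] :=
    fun i => innerH_ne_nil G hN χ j r i
  have hFMne := DEA.flatMap_ne_nil hgne hfk
  rcases DEA.mem_dirEdges_cons he with ⟨h1, h2⟩ | he
  · rw [List.head?_append_of_ne_nil _ hFMne, DEA.head?_flatMap hgne hfk,
      DEA.head_finRange k hk _, innerH_head G hN χ j r] at h2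
    rw [Option.some_inj] at h2
    left
    exact ⟨⟨0, hk⟩, ⟨0, hN⟩, Prod.ext h1 h2.symm⟩
  · rcases DEA.mem_dirEdges_append he with he | ⟨h1, h2⟩ | he
    · rcases DEA.mem_dirEdges_flatMap hgne he with
        ⟨i, _, hej⟩ | ⟨⟨i, i'⟩, hpp, h1, h2⟩
      · rcases DEA.mem_dirEdges_flatMap (fun q => eTriple_ne_nil G _ _ _ _ _) hej with
          ⟨q, _, het⟩ | ⟨⟨q, q'⟩, hpp, h1, h2⟩
        · rw [eTriple_eq] at het
          simp only [dirEdges, List.tail_cons, List.zip_cons_cons, List.zip_nil_right,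
            List.mem_cons, List.not_mem_nil, or_false] at het
          rcases het with h | h
          · exact Or.inr (Or.inl ⟨i, q, h⟩)
          · exact Or.inr (Or.inr (Or.inl ⟨i, q, h⟩))
        · have hsucc := DEA.rel_of_mem_zip_tail (DEA.chain'_finRange N) _ hpp
          rw [eTriple_eq] at h1 h2
          simp only [List.getLast?_cons_cons, List.getLast?_singleton,
            List.head?_cons, Option.some.injEq] at h1 h2
          refine Or.inr (Or.inr (Or.inr (Or.inl ⟨i, i, q, q', ?_, Prod.ext h1.symm h2.symm⟩)))
          simp only at hsucc
          omega
      · have hsucc := DEA.rel_of_mem_zip_tail (DEA.chain'_finRange k) _ hpp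
        rw [innerH_last G hN χ j r i, Option.some_inj] at h1
        rw [innerH_head G hN χ j r i', Option.some_inj] at h2
        refine Or.inr (Or.inr (Or.inr (Or.inl
          ⟨i, i', ⟨N - 1, by omega⟩, ⟨0, hN⟩, ?_, Prod.ext h1.symm h2.symm⟩)))
        simp only at hsucc
        omega
    · rw [DEA.getLast?_flatMap hgne hfk, DEA.getLast_finRange k hk _,
        innerH_last G hN χ j r, Option.some_inj] at h1
      simp only [List.head?_cons, Option.some.injEq] at h2
      exact Or.inr (Or.inr (Or.inr (Or.inr
        ⟨⟨k - 1, by omega⟩, ⟨N - 1, by omega⟩, Prod.ext h1.symm h2.symm⟩)))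
    · simp [dirEdges] at he

end DEC
namespace DEC

variable {k N : ℕ} (G : SimpleGraph (Fin N)) [DecidableRel G.Adj]

theorem LB_ne_mtag (b : Bool) (i j : Fin k) (q ℓ : Fin N) :
    ETag.LB ≠ mtag G b i j q ℓ := (mtag_ne_LB G b i j q ℓ).symm

theorem TR_ne_mtag (b : Bool) (i j : Fin k) (q ℓ : Fin N) :
    ETag.TR ≠ mtag G b i j q ℓ := (mtag_ne_TR G b i j q ℓ).symm

theorem disjVV (hN : 0 < N) (hk : 0 < k) {i i' : Fin k} (hii : i ≠ i')
    (χ χ' : Fin k → Fin N → Bool) (r r' : Fin N) :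
    EdgeDisj (imageV G χ i r) (imageV G χ' i' r') := by
  intro e he he'
  rcases mem_dirEdges_imageV G hN hk he with
      ⟨j, ℓ, rfl⟩ | ⟨j, ℓ, rfl⟩ | ⟨j, ℓ, rfl⟩ | ⟨j, j2, ℓ, ℓ2, hc, rfl⟩ | ⟨j, ℓ, rfl⟩ <;>
    rcases mem_dirEdges_imageV G hN hk he' with
      ⟨J, L, hE⟩ | ⟨J, L, hE⟩ | ⟨J, L, hE⟩ | ⟨J, J2, L, L2, hc', hE⟩ | ⟨J, L, hE⟩ <;>
    simp_all

theorem disjHH (hN : 0 < N) (hk : 0 < k) {j j' : Fin k} (hjj : j ≠ j')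
    (χ χ' : Fin k → Fin N → Bool) (r r' : Fin N) :
    EdgeDisj (imageH G χ j r) (imageH G χ' j' r') := by
  intro e he he'
  rcases mem_dirEdges_imageH G hN hk he with
      ⟨a, q, rfl⟩ | ⟨a, q, rfl⟩ | ⟨a, q, rfl⟩ | ⟨a, a2, q, q2, hc, rfl⟩ | ⟨a, q, rfl⟩ <;>
    rcases mem_dirEdges_imageH G hN hk he' with
      ⟨A, Q, hE⟩ | ⟨A, Q, hE⟩ | ⟨A, Q, hE⟩ | ⟨A, A2, Q, Q2, hc', hE⟩ | ⟨A, Q, hE⟩ <;>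
    simp_all

theorem disjVH (hN : 0 < N) (hk : 0 < k) (i j : Fin k) (r r' : Fin N)
    (hsp : Split G i j r r') :
    EdgeDisj (imageV G (fun _ _ => false) i r) (imageH G (fun _ _ => true) j r') := by
  intro e he he'
  rcases mem_dirEdges_imageV G hN hk he with
      ⟨jv, ℓv, rfl⟩ | ⟨jv, ℓv, rfl⟩ | ⟨jv, ℓv, rfl⟩ |
      ⟨jv, jv2, ℓv, ℓv2, hcv, rfl⟩ | ⟨jv, ℓv, rfl⟩
  · rcases mem_dirEdges_imageH G hN hk he' with
        ⟨ih, qh, hE⟩ | ⟨ih, qh, hE⟩ | ⟨ih, qh, hE⟩ | ⟨ih, ih2, qh, qh2, hch, hE⟩ | ⟨ih, qh, hE⟩ <;>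
      simp_all
  · rcases mem_dirEdges_imageH G hN hk he' with
        ⟨ih, qh, hE⟩ | ⟨ih, qh, hE⟩ | ⟨ih, qh, hE⟩ | ⟨ih, ih2, qh, qh2, hch, hE⟩ | ⟨ih, qh, hE⟩
    · simp_all
    · -- (2,2'): middle tags clash at the crossing
      simp only [Prod.mk.injEq, DEdgeV.grid.injEq] at hE
      obtain ⟨⟨e1, e2, e3, e4, -⟩, -, -, -, -, hm⟩ := hE
      subst e1; subst e2; subst e3; subst e4
      simp [mtag, if_pos hsp] at hm
    · simp_all [mtag_ne_TR, TR_ne_mtag, mtag_ne_LB, LB_ne_mtag]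
    · simp_all [mtag_ne_TR, TR_ne_mtag, mtag_ne_LB, LB_ne_mtag]
    · simp_all
  · rcases mem_dirEdges_imageH G hN hk he' with
        ⟨ih, qh, hE⟩ | ⟨ih, qh, hE⟩ | ⟨ih, qh, hE⟩ | ⟨ih, ih2, qh, qh2, hch, hE⟩ | ⟨ih, qh, hE⟩
    · simp_all
    · simp_all [mtag_ne_TR, TR_ne_mtag, mtag_ne_LB, LB_ne_mtag]
    · -- (3,3'): middle tags clash at the crossing
      simp only [Prod.mk.injEq, DEdgeV.grid.injEq] at hE
      obtain ⟨⟨e1, e2, e3, e4, hm⟩, -⟩ := hE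
      subst e1; subst e2; subst e3; subst e4
      simp [mtag, if_pos hsp] at hm
    · simp_all [mtag_ne_TR, TR_ne_mtag, mtag_ne_LB, LB_ne_mtag]
    · simp_all
  · rcases mem_dirEdges_imageH G hN hk he' with
        ⟨ih, qh, hE⟩ | ⟨ih, qh, hE⟩ | ⟨ih, qh, hE⟩ | ⟨ih, ih2, qh, qh2, hch, hE⟩ | ⟨ih, qh, hE⟩
    · simp_all
    · simp_all [mtag_ne_TR, TR_ne_mtag, mtag_ne_LB, LB_ne_mtag]
    · simp_all [mtag_ne_TR, TR_ne_mtag, mtag_ne_LB, LB_ne_mtag]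
    · -- (4,4'): grid-to-grid transition edges cannot coincide
      simp only [Prod.mk.injEq, DEdgeV.grid.injEq] at hE
      obtain ⟨⟨-, e1, -, e2, -⟩, -, e3, -, e4, -⟩ := hE
      exact hcv ⟨congrArg Fin.val (e1.trans e3.symm), congrArg Fin.val (e2.trans e4.symm)⟩
    · simp_all
  · rcases mem_dirEdges_imageH G hN hk he' with
        ⟨ih, qh, hE⟩ | ⟨ih, qh, hE⟩ | ⟨ih, qh, hE⟩ | ⟨ih, ih2, qh, qh2, hch, hE⟩ | ⟨ih, qh, hE⟩ <;>
      simp_all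

end DEC
/-- if `G` contains a clique `{v_{γ_1},…,v_{γ_k}}` of size `k` (`k`
distinct, pairwise adjacent vertices), then the `2k` directed paths
`Canonical_edge(γ_i; a_i⇝b_i)` (`i ∈ [k]`) and `Canonical_edge(γ_j; c_j⇝d_j)`
(`j ∈ [k]`) are pairwise edge-disjoint and each is a shortest path in `D_edge` between
its terminal pair: all `2k` terminal pairs of `(D_edge, T)` are simultaneously
satisfied. -/
theorem DEdge_completeness (N k : ℕ) (hN : 1 ≤ N) (hk : 1 ≤ k)
    (G : SimpleGraph (Fin N)) [DecidableRel G.Adj]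
    (γ : Fin k → Fin N) (hinj : Function.Injective γ)
    (hadj : ∀ i i' : Fin k, i ≠ i' → G.Adj (γ i) (γ i')) :
    (∀ i : Fin k,
      IsShortestDirPath (DEdgeE k N G) (DEdgeV.a i) (DEdgeV.b i) (canonEdgeV G i (γ i))) ∧
    (∀ j : Fin k,
      IsShortestDirPath (DEdgeE k N G) (DEdgeV.c j) (DEdgeV.d j) (canonEdgeH G j (γ j))) ∧
    (∀ i i' : Fin k, i ≠ i' →
      EdgeDisj (canonEdgeV G i (γ i)) (canonEdgeV G i' (γ i'))) ∧
    (∀ j j' : Fin k, j ≠ j' →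
      EdgeDisj (canonEdgeH G j (γ j)) (canonEdgeH G j' (γ j'))) ∧
    (∀ i j : Fin k, EdgeDisj (canonEdgeV G i (γ i)) (canonEdgeH G j (γ j))) := by
  have hN' : 0 < N := hN
  have hk' : 0 < k := hk
  have hsp : ∀ i j : Fin k, Split G i j (γ i) (γ j) := by
    intro i j
    by_cases h : i = j
    · exact Or.inl ⟨h, by rw [h]⟩
    · exact Or.inr ⟨h, hadj i j h⟩
  refine ⟨?_, ?_, ?_, ?_, ?_⟩
  · intro i
    show IsShortestDirPath (DEdgeE k N G) (DEdgeV.a i) (DEdgeV.b i)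
      (imageV G (fun _ _ => false) i (γ i))
    exact DEC.shortestV G hN' hk' _ i (γ i)
  · intro j
    show IsShortestDirPath (DEdgeE k N G) (DEdgeV.c j) (DEdgeV.d j)
      (imageH G (fun _ _ => true) j (γ j))
    exact DEC.shortestH G hN' hk' _ j (γ j)
  · intro i i' hii
    show EdgeDisj (imageV G (fun _ _ => false) i (γ i)) (imageV G (fun _ _ => false) i' (γ i'))
    exact DEC.disjVV G hN' hk' hii _ _ _ _
  · intro j j' hjj
    show EdgeDisj (imageH G (fun _ _ => true) j (γ j)) (imageH G (fun _ _ => true) j' (γ j'))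
    exact DEC.disjHH G hN' hk' hjj _ _ _ _
  · intro i j
    show EdgeDisj (imageV G (fun _ _ => false) i (γ i)) (imageH G (fun _ _ => true) j (γ j))
    exact DEC.disjVH G hN' hk' i j (γ i) (γ j) (hsp i j)
end
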